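/- arXiv:1508.00244 — 3 statements merged into one kernel-verified Lean document; each statement's English description precedes it below -/
import Mathlib

section
/- Let T be a measure-preserving transformation of a probability space (X,m), E ⊆ X measurable, and 0 < δ < 1. Define E* = { x ∈ X : liminf_{n→∞} #{ n' < δn : T^{n−n'} x ∈ E }/(δn) > 0 }. Then m(E*) ≥ m(E). -/
open Filter MeasureTheory Set Topology
open scoped ENNReal
set_option linter.unusedSectionVars false
set_option maxHeartbeats 800000

namespace Stmt7Aux

variable {X : Type*} [MeasurableSpace X]

noncomputable def bS (T : X → X) (f : X → ℝ≥0∞) (n : ℕ) (x : X) : ℝ≥0∞ :=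
  ∑ i ∈ Finset.range n, f (T^[i] x)

noncomputable def bA (T : X → X) (f : X → ℝ≥0∞) (n : ℕ) (x : X) : ℝ≥0∞ :=
  bS T f n x / n

variable {T : X → X} {f : X → ℝ≥0∞}

lemma bS_le (hf1 : ∀ x, f x ≤ 1) (n : ℕ) (x : X) : bS T f n x ≤ n := by
  calc bS T f n x ≤ ∑ _i ∈ Finset.range n, 1 := Finset.sum_le_sum fun i _ => hf1 _
  _ = n := by simp

lemma bS_ne_top (hf1 : ∀ x, f x ≤ 1) (n : ℕ) (x : X) : bS T f n x ≠ ∞ :=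
  ((bS_le hf1 n x).trans_lt (by simp)).ne

lemma bA_le_one (hf1 : ∀ x, f x ≤ 1) (n : ℕ) (x : X) : bA T f n x ≤ 1 := by
  rcases Nat.eq_zero_or_pos n with h | h
  · simp [bA, bS, h]
  · rw [bA, ENNReal.div_le_iff (by exact_mod_cast h.ne') (by simp), one_mul]
    exact bS_le hf1 n x

lemma bS_succ' (n : ℕ) (x : X) : bS T f (n+1) x = f x + bS T f n (T x) := by
  rw [bS, Finset.sum_range_succ']
  simp only [Function.iterate_succ, Function.comp_apply, Function.iterate_zero, id_eq]
  rw [add_comm, bS]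

lemma bS_add (a b : ℕ) (x : X) : bS T f (a+b) x = bS T f a x + bS T f b (T^[a] x) := by
  rw [bS, Finset.sum_range_add, bS, bS]
  congr 1
  refine Finset.sum_congr rfl fun i _ => ?_
  rw [add_comm a i, Function.iterate_add_apply]

lemma bA_pair (hf1 : ∀ x, f x ≤ 1) (n : ℕ) (hn : 1 ≤ n) (x : X) :
    bA T f (n+1) x ≤ bA T f n (T x) + 2/(n:ℝ≥0∞) ∧
      bA T f n (T x) ≤ bA T f (n+1) x + 2/(n:ℝ≥0∞) := by
  have hS : bS T f n (T x) ≠ ∞ := bS_ne_top hf1 n (T x)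
  have hSn := bS_le (T := T) hf1 n (T x)
  have ha : f x ≠ ∞ := ((hf1 x).trans_lt (by simp)).ne
  have hn0 : ((n:ℝ≥0∞)) ≠ 0 := by exact_mod_cast (Nat.pos_of_ne_zero (by omega)).ne'
  have hn0' : ((n+1:ℕ):ℝ≥0∞) ≠ 0 := by positivity
  have h1 : bA T f (n+1) x ≠ ∞ := by
    rw [bA, bS_succ']
    exact (ENNReal.div_lt_top (by simp [ENNReal.add_ne_top, ha, hS]) hn0').ne
  have h2 : bA T f n (T x) ≠ ∞ := by
    rw [bA]; exact (ENNReal.div_lt_top hS hn0).ne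
  have h3 : (2:ℝ≥0∞)/(n:ℝ≥0∞) ≠ ∞ := (ENNReal.div_lt_top (by simp) hn0).ne
  -- real versions
  set sr := (bS T f n (T x)).toReal with hsr
  set ar := (f x).toReal with har
  have hsr0 : 0 ≤ sr := ENNReal.toReal_nonneg
  have hsrn : sr ≤ n := by
    have := ENNReal.toReal_mono (by simp) hSn
    simpa using this
  have har0 : 0 ≤ ar := ENNReal.toReal_nonneg
  have har1 : ar ≤ 1 := by
    have := ENNReal.toReal_mono (by simp) (hf1 x)
    simpa using this
  have hnr : (1:ℝ) ≤ (n:ℝ) := by exact_mod_cast hn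
  have e1 : (bA T f (n+1) x).toReal = (ar + sr)/((n:ℝ)+1) := by
    rw [bA, bS_succ', ENNReal.toReal_div, ENNReal.toReal_add ha hS]
    simp [ENNReal.toReal_add (show ((n:ℝ≥0∞)) ≠ ⊤ by simp) (show (1:ℝ≥0∞) ≠ ⊤ by simp)]
    rfl
  have e2 : (bA T f n (T x)).toReal = sr/(n:ℝ) := by
    rw [bA, ENNReal.toReal_div]
    simp
    rfl
  have e3 : ((2:ℝ≥0∞)/(n:ℝ≥0∞)).toReal = 2/(n:ℝ) := by
    rw [ENNReal.toReal_div]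
    simp
  constructor
  · rw [← ENNReal.toReal_le_toReal h1 (ENNReal.add_ne_top.mpr ⟨h2, h3⟩),
      ENNReal.toReal_add h2 h3, e1, e2, e3]
    rw [div_add_div _ _ (by linarith) (by linarith), div_le_div_iff₀ (by linarith) (by positivity)]
    nlinarith
  · rw [← ENNReal.toReal_le_toReal h2 (ENNReal.add_ne_top.mpr ⟨h1, h3⟩),
      ENNReal.toReal_add h1 h3, e1, e2, e3]
    rw [div_add_div _ _ (by positivity) (by linarith), div_le_div_iff₀ (by linarith) (by positivity)]
    nlinarith [mul_le_mul_of_nonneg_right hsrn (by positivity : (0:ℝ) ≤ (n:ℝ))]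

noncomputable def fbar (T : X → X) (f : X → ℝ≥0∞) (x : X) : ℝ≥0∞ :=
  limsup (fun n => bA T f n x) atTop

noncomputable def flo (T : X → X) (f : X → ℝ≥0∞) (x : X) : ℝ≥0∞ :=
  liminf (fun n => bA T f n x) atTop

lemma ennreal_limsup_add_const (v : ℕ → ℝ≥0∞) (ε : ℝ≥0∞) :
    limsup (fun n => v n + ε) atTop = limsup v atTop + ε := by
  have := (Monotone.map_limsup_of_continuousAt (F := (atTop : Filter ℕ))
    (f := fun z : ℝ≥0∞ => z + ε) (fun a b hab => add_le_add_left hab ε) v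
    ((continuous_id.add continuous_const).continuousAt))
  simpa [Function.comp_def] using this.symm

lemma ennreal_liminf_add_const (v : ℕ → ℝ≥0∞) (ε : ℝ≥0∞) :
    liminf (fun n => v n + ε) atTop = liminf v atTop + ε := by
  have := (Monotone.map_liminf_of_continuousAt (F := (atTop : Filter ℕ))
    (f := fun z : ℝ≥0∞ => z + ε) (fun a b hab => add_le_add_left hab ε) v
    ((continuous_id.add continuous_const).continuousAt))
  simpa [Function.comp_def] using this.symm

lemma ennreal_limsup_le_of_le_add (u v : ℕ → ℝ≥0∞)
    (h : ∀ ε : ℝ≥0∞, 0 < ε → ε ≠ ∞ → ∀ᶠ n in atTop, u n ≤ v n + ε) :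
    limsup u atTop ≤ limsup v atTop := by
  refine ENNReal.le_of_forall_pos_le_add fun ε hε _ => ?_
  calc limsup u atTop ≤ limsup (fun n => v n + ε) atTop :=
        limsup_le_limsup (h ε (by exact_mod_cast hε) (by simp))
  _ = limsup v atTop + ε := ennreal_limsup_add_const v ε

lemma ennreal_liminf_le_of_le_add (u v : ℕ → ℝ≥0∞)
    (h : ∀ ε : ℝ≥0∞, 0 < ε → ε ≠ ∞ → ∀ᶠ n in atTop, u n ≤ v n + ε) :
    liminf u atTop ≤ liminf v atTop := by
  refine ENNReal.le_of_forall_pos_le_add fun ε hε _ => ?_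
  calc liminf u atTop ≤ liminf (fun n => v n + ε) atTop :=
        liminf_le_liminf (h ε (by exact_mod_cast hε) (by simp))
  _ = liminf v atTop + ε := ennreal_liminf_add_const v ε

lemma ennreal_ev_div_le (ε : ℝ≥0∞) (hε : 0 < ε) (hε' : ε ≠ ∞) :
    ∀ᶠ n : ℕ in atTop, 2 / (n : ℝ≥0∞) ≤ ε := by
  obtain ⟨k, hk⟩ := ENNReal.exists_nat_gt (show 2/ε ≠ ⊤ by
    simp [ENNReal.div_eq_top, hε.ne', hε'])
  filter_upwards [eventually_ge_atTop (k+1)] with n hn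
  have hn0 : (n : ℝ≥0∞) ≠ 0 := by exact_mod_cast (Nat.lt_of_lt_of_le k.succ_pos hn).ne'
  rw [ENNReal.div_le_iff hn0 (by simp)]
  calc (2 : ℝ≥0∞) = (2/ε) * ε := by rw [ENNReal.div_mul_cancel hε.ne' hε']
  _ ≤ (k:ℝ≥0∞) * ε := mul_le_mul_left hk.le ε
  _ ≤ (n:ℝ≥0∞) * ε := by
      gcongr
      exact_mod_cast le_trans (Nat.le_succ k) hn
  _ = ε * n := mul_comm _ _

lemma limsup_shift (u : ℕ → ℝ≥0∞) :
    limsup (fun n => u (n+1)) atTop = limsup u atTop := by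
  have h : map (fun n => u (n+1)) atTop = map u atTop := by
    rw [show (fun n => u (n+1)) = u ∘ (fun n => n + 1) from rfl, ← Filter.map_map,
      Filter.map_add_atTop_eq_nat]
  rw [limsup, limsup, h]

lemma liminf_shift (u : ℕ → ℝ≥0∞) :
    liminf (fun n => u (n+1)) atTop = liminf u atTop := by
  have h : map (fun n => u (n+1)) atTop = map u atTop := by
    rw [show (fun n => u (n+1)) = u ∘ (fun n => n + 1) from rfl, ← Filter.map_map,
      Filter.map_add_atTop_eq_nat]
  rw [liminf, liminf, h]

lemma fbar_comp (hf1 : ∀ x, f x ≤ 1) (x : X) : fbar T f (T x) = fbar T f x := by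
  have hs : limsup (fun n => bA T f (n+1) x) atTop = fbar T f x :=
    limsup_shift (fun n => bA T f n x)
  refine le_antisymm ?_ ?_
  · rw [fbar, ← hs]
    refine ennreal_limsup_le_of_le_add _ _ fun ε hε hε' => ?_
    filter_upwards [ennreal_ev_div_le ε hε hε', eventually_ge_atTop 1] with n h2 hn1
    exact le_trans ((bA_pair hf1 n hn1 x).2) (add_le_add_right h2 _)
  · rw [show fbar T f x = limsup (fun n => bA T f (n+1) x) atTop from hs.symm, fbar]
    refine ennreal_limsup_le_of_le_add _ _ fun ε hε hε' => ?_
    filter_upwards [ennreal_ev_div_le ε hε hε', eventually_ge_atTop 1] with n h2 hn1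
    exact le_trans ((bA_pair hf1 n hn1 x).1) (add_le_add_right h2 _)

lemma flo_comp (hf1 : ∀ x, f x ≤ 1) (x : X) : flo T f (T x) = flo T f x := by
  have hs : liminf (fun n => bA T f (n+1) x) atTop = flo T f x :=
    liminf_shift (fun n => bA T f n x)
  refine le_antisymm ?_ ?_
  · rw [flo, ← hs]
    refine ennreal_liminf_le_of_le_add _ _ fun ε hε hε' => ?_
    filter_upwards [ennreal_ev_div_le ε hε hε', eventually_ge_atTop 1] with n h2 hn1
    exact le_trans ((bA_pair hf1 n hn1 x).2) (add_le_add_right h2 _)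
  · rw [show flo T f x = liminf (fun n => bA T f (n+1) x) atTop from hs.symm, flo]
    refine ennreal_liminf_le_of_le_add _ _ fun ε hε hε' => ?_
    filter_upwards [ennreal_ev_div_le ε hε hε', eventually_ge_atTop 1] with n h2 hn1
    exact le_trans ((bA_pair hf1 n hn1 x).1) (add_le_add_right h2 _)

lemma fbar_iterate (hf1 : ∀ x, f x ≤ 1) (k : ℕ) (x : X) :
    fbar T f (T^[k] x) = fbar T f x := by
  induction k generalizing x with
  | zero => simp
  | succ k ih => rw [Function.iterate_succ_apply, ih (T x), fbar_comp hf1]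

lemma flo_iterate (hf1 : ∀ x, f x ≤ 1) (k : ℕ) (x : X) :
    flo T f (T^[k] x) = flo T f x := by
  induction k generalizing x with
  | zero => simp
  | succ k ih => rw [Function.iterate_succ_apply, ih (T x), flo_comp hf1]

lemma flo_le_fbar (x : X) : flo T f x ≤ fbar T f x := liminf_le_limsup

lemma fbar_le_one (hf1 : ∀ x, f x ≤ 1) (x : X) : fbar T f x ≤ 1 :=
  limsup_le_of_le (by isBoundedDefault) (Eventually.of_forall fun n => bA_le_one hf1 n x)

lemma measurable_bS (hT : Measurable T) (hf : Measurable f) (n : ℕ) :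
    Measurable (bS T f n) :=
  Finset.measurable_sum _ fun i _ => hf.comp (hT.iterate i)

lemma measurable_bA (hT : Measurable T) (hf : Measurable f) (n : ℕ) :
    Measurable (bA T f n) :=
  (measurable_bS hT hf n).div measurable_const

lemma measurable_fbar (hT : Measurable T) (hf : Measurable f) :
    Measurable (fbar T f) :=
  Measurable.limsup (measurable_bA hT hf)

lemma measurable_flo (hT : Measurable T) (hf : Measurable f) :
    Measurable (flo T f) :=
  Measurable.liminf (measurable_bA hT hf)

section integral

variable (m : Measure X) [IsProbabilityMeasure m]

lemma lintegral_bS (hT : MeasurePreserving T m m) {g : X → ℝ≥0∞} (hg : Measurable g) (L : ℕ) :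
    ∫⁻ x, bS T g L x ∂m = L * ∫⁻ x, g x ∂m := by
  rw [show (fun x => bS T g L x) = fun x => ∑ i ∈ Finset.range L, g (T^[i] x) from rfl]
  rw [lintegral_finset_sum (f := fun i x => g (T^[i] x)) _
    (fun i _ => hg.comp (hT.measurable.iterate i))]
  have : ∀ i, ∫⁻ x, g (T^[i] x) ∂m = ∫⁻ x, g x ∂m := fun i => (hT.iterate i).lintegral_comp hg
  simp only [this, Finset.sum_const, Finset.card_range, nsmul_eq_mul]

/-- Katznelson–Weiss upper estimate. -/
lemma lintegral_fbar_le (hT : MeasurePreserving T m m) (hf : Measurable f)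
    (hf1 : ∀ x, f x ≤ 1) :
    ∫⁻ x, fbar T f x ∂m ≤ ∫⁻ x, f x ∂m := by
  have hfin : ∫⁻ x, f x ∂m ≤ 1 := by
    calc ∫⁻ x, f x ∂m ≤ ∫⁻ _, 1 ∂m := lintegral_mono hf1
    _ = 1 := by simp
  refine ENNReal.le_of_forall_pos_le_add fun ε₀ hε₀ _ => ?_
  set ε : ℝ≥0∞ := (ε₀ : ℝ≥0∞) / 2 with hεdef
  have hε : 0 < ε := ENNReal.div_pos (by exact_mod_cast hε₀.ne') (by simp)
  have hεt : ε ≠ ∞ := by rw [hεdef]; exact (ENNReal.div_lt_top (by simp) (by norm_num)).ne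
  have hεε : ε + ε = (ε₀ : ℝ≥0∞) := ENNReal.add_halves _
  set ψ : X → ℝ≥0∞ := fun x => fbar T f x - ε with hψdef
  have hψm : Measurable ψ := (measurable_fbar hT.measurable hf).sub measurable_const
  have hψ1 : ∀ x, ψ x ≤ 1 := fun x => le_trans (tsub_le_self.trans (fbar_le_one hf1 x)) le_rfl
  have hψinv : ∀ (k : ℕ) (x : X), ψ (T^[k] x) = ψ x := fun k x => by
    simp only [hψdef, fbar_iterate hf1 k x]
  -- existence of a good time for every point
  have hgood : ∀ x : X, ∃ n : ℕ, 1 ≤ n ∧ (n : ℝ≥0∞) * ψ x ≤ bS T f n x := by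
    intro x
    by_cases hc : fbar T f x ≤ ε
    · exact ⟨1, le_rfl, by simp [hψdef, tsub_eq_zero_of_le hc]⟩
    · push_neg at hc
      have hnt : fbar T f x ≠ ∞ := ((fbar_le_one hf1 x).trans_lt (by simp)).ne
      have hlt : ψ x < fbar T f x :=
        ENNReal.sub_lt_self hnt (hε.trans hc).ne' hε.ne'
      have hfreq : ∃ᶠ n in atTop, ψ x < bA T f n x := by
        have : ψ x < limsup (fun n => bA T f n x) atTop := hlt
        exact frequently_lt_of_lt_limsup (by isBoundedDefault) this
      obtain ⟨n, hn1, hn⟩ := (hfreq.and_eventually (eventually_ge_atTop 1)).exists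
      refine ⟨n, hn, ?_⟩
      have hn0 : (n : ℝ≥0∞) ≠ 0 := by exact_mod_cast (Nat.pos_of_ne_zero (by omega)).ne'
      rw [mul_comm, ← ENNReal.le_div_iff_mul_le (Or.inl hn0) (Or.inl (by simp))]
      exact hn1.le
  set A : ℕ → Set X := fun N => ⋂ n ∈ Finset.Icc 1 N, {x | bS T f n x < (n:ℝ≥0∞) * ψ x}
    with hAdef
  have hAmeas : ∀ N, MeasurableSet (A N) := by
    intro N
    refine MeasurableSet.biInter (Finset.Icc 1 N).countable_toSet fun n _ => ?_
    exact measurableSet_lt (measurable_bS hT.measurable hf n) (hψm.const_mul _)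
  have hAanti : Antitone A := fun M N hMN => by
    refine Set.iInter₂_mono' fun n hn => ⟨n, ?_, le_rfl⟩
    simp only [Finset.mem_Icc] at hn ⊢
    omega
  have hAempty : (⋂ N, A N) = ∅ := by
    rw [Set.eq_empty_iff_forall_notMem]
    intro x hx
    obtain ⟨n, hn1, hn⟩ := hgood x
    have hxn := Set.mem_iInter.mp hx n
    simp only [hAdef] at hxn
    have := Set.mem_iInter₂.mp hxn n (by simp [Finset.mem_Icc, hn1])
    exact absurd this (not_lt.mpr hn)
  have htend : Tendsto (fun N => m (A N)) atTop (𝓝 0) := by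
    have := tendsto_measure_iInter_atTop (μ := m) (s := A)
      (fun N => (hAmeas N).nullMeasurableSet) hAanti ⟨0, (measure_lt_top m _).ne⟩
    rwa [hAempty, measure_empty] at this
  obtain ⟨N, hN, hN1⟩ := ((htend.eventually_lt_const hε).and (eventually_ge_atTop 1)).exists
  -- the modified function
  set g : X → ℝ≥0∞ := fun x => f x + (A N).indicator (fun _ => (1:ℝ≥0∞)) x with hgdef
  have hgm : Measurable g := hf.add (measurable_const.indicator (hAmeas N))
  have hkey : ∀ x : X, ∃ n : ℕ, 1 ≤ n ∧ n ≤ N ∧ (n : ℝ≥0∞) * ψ x ≤ bS T g n x := by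
    intro x
    by_cases hx : x ∈ A N
    · refine ⟨1, le_rfl, hN1, ?_⟩
      · have : bS T g 1 x = f x + 1 := by
          simp [bS, hgdef, Set.indicator_of_mem hx]
        rw [this, Nat.cast_one, one_mul]
        exact le_trans (hψ1 x) (le_add_self)
    · have hx' : ∃ n ∈ Finset.Icc 1 N, ¬ (bS T f n x < (n:ℝ≥0∞) * ψ x) := by
        by_contra hC
        push_neg at hC
        exact hx (Set.mem_iInter₂.mpr fun n hn => hC n hn)
      obtain ⟨n, hn, hle⟩ := hx'
      simp only [Finset.mem_Icc] at hn
      refine ⟨n, hn.1, hn.2, le_trans (not_lt.mp hle) ?_⟩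
      exact Finset.sum_le_sum fun i _ => le_add_right le_rfl
  -- the covering induction
  have hcover : ∀ L : ℕ, ∀ x : X, ((L - N : ℕ) : ℝ≥0∞) * ψ x ≤ bS T g L x := by
    intro L
    induction L using Nat.strong_induction_on with
    | _ L ih =>
      intro x
      rcases le_or_gt L N with hLN | hLN
      · simp [Nat.sub_eq_zero_of_le hLN]
      · obtain ⟨n₁, h1, hN1, hkx⟩ := hkey x
        have hsplit : bS T g L x = bS T g n₁ x + bS T g (L - n₁) (T^[n₁] x) := by
          rw [← bS_add]
          congr 1
          omega
        have ih2 := ih (L - n₁) (by omega) (T^[n₁] x)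
        rw [hψinv n₁ x] at ih2
        calc ((L - N : ℕ) : ℝ≥0∞) * ψ x
            ≤ ((n₁ + (L - n₁ - N) : ℕ) : ℝ≥0∞) * ψ x :=
              mul_le_mul_left (Nat.cast_le.mpr (by omega)) _
          _ = (n₁ : ℝ≥0∞) * ψ x + ((L - n₁ - N : ℕ) : ℝ≥0∞) * ψ x := by
              push_cast; ring
          _ ≤ bS T g n₁ x + bS T g (L - n₁) (T^[n₁] x) := add_le_add hkx ih2
          _ = bS T g L x := hsplit.symm
  -- integrate
  have hint : ∀ L : ℕ, ((L - N : ℕ) : ℝ≥0∞) * ∫⁻ x, ψ x ∂m ≤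
      (L : ℝ≥0∞) * (∫⁻ x, f x ∂m + ε) := by
    intro L
    calc ((L - N : ℕ) : ℝ≥0∞) * ∫⁻ x, ψ x ∂m
        = ∫⁻ x, ((L - N : ℕ) : ℝ≥0∞) * ψ x ∂m := (lintegral_const_mul _ hψm).symm
      _ ≤ ∫⁻ x, bS T g L x ∂m := lintegral_mono fun x => hcover L x
      _ = (L : ℝ≥0∞) * ∫⁻ x, g x ∂m := lintegral_bS m hT hgm L
      _ ≤ (L : ℝ≥0∞) * (∫⁻ x, f x ∂m + ε) := by
          gcongr
          rw [hgdef, lintegral_add_right _ (measurable_const.indicator (hAmeas N)),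
            lintegral_indicator (hAmeas N), setLIntegral_one]
          exact add_le_add_right hN.le _
  -- conclude ∫ψ ≤ ∫f + ε
  have hψint : ∫⁻ x, ψ x ∂m ≤ ∫⁻ x, f x ∂m + ε := by
    set a := ∫⁻ x, ψ x ∂m with hadef
    set b := ∫⁻ x, f x ∂m + ε with hbdef
    have ha1 : a ≤ 1 := by
      calc a ≤ ∫⁻ _, 1 ∂m := lintegral_mono hψ1
      _ = 1 := by simp
    have hat : a ≠ ∞ := (ha1.trans_lt (by simp)).ne
    have hbt : b ≠ ∞ := by
      rw [hbdef]
      exact (ENNReal.add_lt_top.mpr ⟨hfin.trans_lt (by simp), hεt.lt_top⟩).ne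
    by_contra hab
    push_neg at hab
    have harb : b.toReal < a.toReal := (ENNReal.toReal_lt_toReal hbt hat).mpr hab
    have hd : 0 < a.toReal - b.toReal := by linarith
    obtain ⟨L, hL⟩ := exists_nat_gt ((N * a.toReal) / (a.toReal - b.toReal))
    have hLkey := hint (N + L)
    have hcast : ((N + L - N : ℕ) : ℝ≥0∞) = (L : ℕ) := by norm_cast; omega
    rw [hcast] at hLkey
    have hreal : (L : ℝ) * a.toReal ≤ ((N + L : ℕ) : ℝ) * b.toReal := by
      have := ENNReal.toReal_mono (by
        exact ENNReal.mul_ne_top (by simp) hbt) hLkey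
      rw [ENNReal.toReal_mul, ENNReal.toReal_mul, ENNReal.toReal_natCast,
        ENNReal.toReal_natCast] at this
      simpa using this
    have h2 : (L:ℝ) * (a.toReal - b.toReal) ≤ N * a.toReal := by
      push_cast at hreal
      nlinarith [ENNReal.toReal_nonneg (a := a), (by exact_mod_cast Nat.zero_le N : (0:ℝ) ≤ N)]
    rw [div_lt_iff₀ hd] at hL
    linarith
  -- final chain
  calc ∫⁻ x, fbar T f x ∂m ≤ ∫⁻ x, (ψ x + ε) ∂m := lintegral_mono fun x => le_tsub_add
    _ = ∫⁻ x, ψ x ∂m + ε := by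
        rw [lintegral_add_right _ measurable_const, lintegral_const, measure_univ, mul_one]
    _ ≤ (∫⁻ x, f x ∂m + ε) + ε := add_le_add_left hψint ε
    _ = ∫⁻ x, f x ∂m + (ε₀ : ℝ≥0∞) := by rw [add_assoc, hεε]

/-- Katznelson–Weiss lower estimate. -/
lemma lintegral_le_flo (hT : MeasurePreserving T m m) (hf : Measurable f)
    (hf1 : ∀ x, f x ≤ 1) :
    ∫⁻ x, f x ∂m ≤ ∫⁻ x, flo T f x ∂m := by
  refine ENNReal.le_of_forall_pos_le_add fun ε₀ hε₀ hflot => ?_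
  set ε : ℝ≥0∞ := (ε₀ : ℝ≥0∞) / 2 with hεdef
  have hε : 0 < ε := ENNReal.div_pos (by exact_mod_cast hε₀.ne') (by simp)
  have hεt : ε ≠ ∞ := by rw [hεdef]; exact (ENNReal.div_lt_top (by simp) (by norm_num)).ne
  have hεε : ε + ε = (ε₀ : ℝ≥0∞) := ENNReal.add_halves _
  have hflo1 : ∀ x, flo T f x ≤ 1 := fun x => (flo_le_fbar x).trans (fbar_le_one hf1 x)
  set ψ : X → ℝ≥0∞ := fun x => flo T f x + ε with hψdef
  have hψm : Measurable ψ := (measurable_flo hT.measurable hf).add measurable_const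
  have hψinv : ∀ (k : ℕ) (x : X), ψ (T^[k] x) = ψ x := fun k x => by
    simp only [hψdef, flo_iterate hf1 k x]
  have hgood : ∀ x : X, ∃ n : ℕ, 1 ≤ n ∧ bS T f n x ≤ (n : ℝ≥0∞) * ψ x := by
    intro x
    have hnt : flo T f x ≠ ∞ := ((hflo1 x).trans_lt (by simp)).ne
    have hlt : flo T f x < ψ x := ENNReal.lt_add_right hnt hε.ne'
    have hfreq : ∃ᶠ n in atTop, bA T f n x < ψ x :=
      frequently_lt_of_liminf_lt (by isBoundedDefault) hlt
    obtain ⟨n, hn1, hn⟩ := (hfreq.and_eventually (eventually_ge_atTop 1)).exists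
    refine ⟨n, hn, ?_⟩
    have hn0 : (n : ℝ≥0∞) ≠ 0 := by exact_mod_cast (Nat.pos_of_ne_zero (by omega)).ne'
    have := (ENNReal.div_le_iff hn0 (by simp)).mp (le_of_lt hn1)
    rwa [mul_comm] at this
  set A : ℕ → Set X := fun N => ⋂ n ∈ Finset.Icc 1 N, {x | (n:ℝ≥0∞) * ψ x < bS T f n x}
    with hAdef
  have hAmeas : ∀ N, MeasurableSet (A N) := by
    intro N
    refine MeasurableSet.biInter (Finset.Icc 1 N).countable_toSet fun n _ => ?_
    exact measurableSet_lt (hψm.const_mul _) (measurable_bS hT.measurable hf n)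
  have hAanti : Antitone A := fun M N hMN => by
    refine Set.iInter₂_mono' fun n hn => ⟨n, ?_, le_rfl⟩
    simp only [Finset.mem_Icc] at hn ⊢
    omega
  have hAempty : (⋂ N, A N) = ∅ := by
    rw [Set.eq_empty_iff_forall_notMem]
    intro x hx
    obtain ⟨n, hn1, hn⟩ := hgood x
    have hxn := Set.mem_iInter.mp hx n
    simp only [hAdef] at hxn
    have := Set.mem_iInter₂.mp hxn n (by simp [Finset.mem_Icc, hn1])
    exact absurd this (not_lt.mpr hn)
  have htend : Tendsto (fun N => m (A N)) atTop (𝓝 0) := by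
    have := tendsto_measure_iInter_atTop (μ := m) (s := A)
      (fun N => (hAmeas N).nullMeasurableSet) hAanti ⟨0, (measure_lt_top m _).ne⟩
    rwa [hAempty, measure_empty] at this
  obtain ⟨N, hN, hN1⟩ := ((htend.eventually_lt_const hε).and (eventually_ge_atTop 1)).exists
  set g : X → ℝ≥0∞ := fun x => ((A N)ᶜ).indicator f x with hgdef
  have hgm : Measurable g := hf.indicator (hAmeas N).compl
  have hg1 : ∀ x, g x ≤ 1 := fun x => by
    rw [hgdef]
    exact le_trans (Set.indicator_le_self _ _ x) (hf1 x)
  have hgf : ∀ x, g x ≤ f x := fun x => Set.indicator_le_self _ _ x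
  have hkey : ∀ x : X, ∃ n : ℕ, 1 ≤ n ∧ n ≤ N ∧ bS T g n x ≤ (n : ℝ≥0∞) * ψ x := by
    intro x
    by_cases hx : x ∈ A N
    · refine ⟨1, le_rfl, hN1, ?_⟩
      have : bS T g 1 x = 0 := by
        simp [bS, hgdef, Set.indicator_of_notMem (by simpa using hx : x ∉ (A N)ᶜ)]
      rw [this]
      exact zero_le
    · have hx' : ∃ n ∈ Finset.Icc 1 N, ¬ ((n:ℝ≥0∞) * ψ x < bS T f n x) := by
        by_contra hC
        push_neg at hC
        exact hx (Set.mem_iInter₂.mpr fun n hn => hC n hn)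
      obtain ⟨n, hn, hle⟩ := hx'
      simp only [Finset.mem_Icc] at hn
      refine ⟨n, hn.1, hn.2, le_trans ?_ (not_lt.mp hle)⟩
      exact Finset.sum_le_sum fun i _ => hgf _
  have hcover : ∀ L : ℕ, ∀ x : X, bS T g L x ≤ (L : ℝ≥0∞) * ψ x + N := by
    intro L
    induction L using Nat.strong_induction_on with
    | _ L ih =>
      intro x
      rcases le_or_gt L N with hLN | hLN
      · calc bS T g L x ≤ L := bS_le hg1 L x
        _ ≤ N := Nat.cast_le.mpr hLN
        _ ≤ (L : ℝ≥0∞) * ψ x + N := le_add_self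
      · obtain ⟨n₁, h1, hNn, hkx⟩ := hkey x
        have hsplit : bS T g L x = bS T g n₁ x + bS T g (L - n₁) (T^[n₁] x) := by
          rw [← bS_add]
          congr 1
          omega
        have ih2 := ih (L - n₁) (by omega) (T^[n₁] x)
        rw [hψinv n₁ x] at ih2
        calc bS T g L x = bS T g n₁ x + bS T g (L - n₁) (T^[n₁] x) := hsplit
          _ ≤ (n₁ : ℝ≥0∞) * ψ x + ((L - n₁ : ℕ) : ℝ≥0∞) * ψ x + N := by
              rw [add_assoc]
              exact add_le_add hkx ih2
          _ = ((n₁ + (L - n₁) : ℕ) : ℝ≥0∞) * ψ x + N := by push_cast; ring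
          _ = (L : ℝ≥0∞) * ψ x + N := by
              congr 2
              exact_mod_cast congrArg (Nat.cast (R := ℝ≥0∞)) (by omega : n₁ + (L - n₁) = L)
  have hint : ∀ L : ℕ, (L : ℝ≥0∞) * ∫⁻ x, g x ∂m ≤ (L : ℝ≥0∞) * ∫⁻ x, ψ x ∂m + N := by
    intro L
    calc (L : ℝ≥0∞) * ∫⁻ x, g x ∂m = ∫⁻ x, bS T g L x ∂m := (lintegral_bS m hT hgm L).symm
      _ ≤ ∫⁻ x, ((L : ℝ≥0∞) * ψ x + N) ∂m := lintegral_mono fun x => hcover L x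
      _ = (L : ℝ≥0∞) * ∫⁻ x, ψ x ∂m + N := by
          rw [lintegral_add_right _ measurable_const, lintegral_const_mul _ hψm,
            lintegral_const, measure_univ, mul_one]
  have hψfin : ∫⁻ x, ψ x ∂m ≤ 1 + ε := by
    rw [hψdef]
    calc ∫⁻ x, (flo T f x + ε) ∂m = ∫⁻ x, flo T f x ∂m + ε := by
          rw [lintegral_add_right _ measurable_const, lintegral_const, measure_univ, mul_one]
    _ ≤ 1 + ε := by
        gcongr
        calc ∫⁻ x, flo T f x ∂m ≤ ∫⁻ _, 1 ∂m := lintegral_mono hflo1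
        _ = 1 := by simp
  have hgint : ∫⁻ x, g x ∂m ≤ ∫⁻ x, ψ x ∂m := by
    set a := ∫⁻ x, g x ∂m with hadef
    set b := ∫⁻ x, ψ x ∂m with hbdef
    have ha1 : a ≤ 1 := by
      calc a ≤ ∫⁻ _, 1 ∂m := lintegral_mono hg1
      _ = 1 := by simp
    have hat : a ≠ ∞ := (ha1.trans_lt (by simp)).ne
    have hbt : b ≠ ∞ := (hψfin.trans_lt (by
      exact ENNReal.add_lt_top.mpr ⟨by simp, hεt.lt_top⟩)).ne
    by_contra hab
    push_neg at hab
    have harb : b.toReal < a.toReal := (ENNReal.toReal_lt_toReal hbt hat).mpr hab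
    have hd : 0 < a.toReal - b.toReal := by linarith
    obtain ⟨L, hL⟩ := exists_nat_gt ((N : ℝ) / (a.toReal - b.toReal))
    have hLkey := hint L
    have hreal : (L : ℝ) * a.toReal ≤ (L : ℝ) * b.toReal + N := by
      have := ENNReal.toReal_mono (by
        exact (ENNReal.add_lt_top.mpr ⟨ENNReal.mul_lt_top (by simp) hbt.lt_top,
          by simp⟩).ne) hLkey
      rw [ENNReal.toReal_add (ENNReal.mul_ne_top (by simp) hbt) (by simp),
        ENNReal.toReal_mul, ENNReal.toReal_mul] at this
      simpa using this
    have h2 : (L:ℝ) * (a.toReal - b.toReal) ≤ N := by nlinarith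
    rw [div_lt_iff₀ hd] at hL
    linarith
  have hfg : ∫⁻ x, f x ∂m ≤ ∫⁻ x, g x ∂m + ε := by
    have hpt : ∀ x, f x ≤ g x + (A N).indicator (fun _ => (1:ℝ≥0∞)) x := by
      intro x
      by_cases hx : x ∈ A N
      · rw [Set.indicator_of_mem hx]
        exact le_trans (hf1 x) le_add_self
      · rw [hgdef]
        simp [Set.indicator_of_mem (by simpa using hx : x ∈ (A N)ᶜ), hx]
    calc ∫⁻ x, f x ∂m ≤ ∫⁻ x, (g x + (A N).indicator (fun _ => (1:ℝ≥0∞)) x) ∂m :=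
          lintegral_mono hpt
    _ = ∫⁻ x, g x ∂m + m (A N) := by
        rw [lintegral_add_right _ (measurable_const.indicator (hAmeas N)),
          lintegral_indicator (hAmeas N), setLIntegral_one]
    _ ≤ ∫⁻ x, g x ∂m + ε := add_le_add_right hN.le _
  calc ∫⁻ x, f x ∂m ≤ ∫⁻ x, g x ∂m + ε := hfg
    _ ≤ ∫⁻ x, ψ x ∂m + ε := add_le_add_left hgint ε
    _ = (∫⁻ x, flo T f x ∂m + ε) + ε := by
        rw [hψdef]
        congr 1
        rw [lintegral_add_right _ measurable_const, lintegral_const, measure_univ, mul_one]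
    _ = ∫⁻ x, flo T f x ∂m + (ε₀ : ℝ≥0∞) := by rw [add_assoc, hεε]

lemma ae_tendsto (hT : MeasurePreserving T m m) (hf : Measurable f)
    (hf1 : ∀ x, f x ≤ 1) :
    ∀ᵐ x ∂m, Tendsto (fun n => bA T f n x) atTop (𝓝 (fbar T f x)) := by
  have hmono : ∫⁻ x, flo T f x ∂m ≤ ∫⁻ x, fbar T f x ∂m :=
    lintegral_mono fun x => flo_le_fbar x
  have hchain : ∫⁻ x, fbar T f x ∂m ≤ ∫⁻ x, flo T f x ∂m :=
    (lintegral_fbar_le m hT hf hf1).trans (lintegral_le_flo m hT hf hf1)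
  have hflot : ∫⁻ x, flo T f x ∂m ≠ ∞ := by
    refine ((lintegral_mono fun x => (flo_le_fbar x).trans (fbar_le_one hf1 x)).trans_lt ?_).ne
    simp
  have hsub : ∫⁻ x, (fbar T f x - flo T f x) ∂m = 0 := by
    rw [lintegral_sub (measurable_flo hT.measurable hf) hflot
      (Eventually.of_forall fun x => flo_le_fbar x)]
    exact tsub_eq_zero_of_le hchain
  have hae0 : ∀ᵐ x ∂m, fbar T f x - flo T f x = 0 := by
    have := (lintegral_eq_zero_iff
      ((measurable_fbar hT.measurable hf).sub (measurable_flo hT.measurable hf))).mp hsub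
    filter_upwards [this] with x hx using hx
  filter_upwards [hae0] with x hx
  have heq : flo T f x = fbar T f x :=
    le_antisymm (flo_le_fbar x) (tsub_eq_zero_iff_le.mp hx)
  exact tendsto_of_liminf_eq_limsup heq rfl

end integral

/-- The deterministic window argument. -/
lemma window_liminf (E : Set X) (x : X) {δ cr : ℝ} (hδ0 : 0 < δ) (hδ1 : δ < 1) (hcr : 0 < cr)
    (hconv : Tendsto (fun n : ℕ =>
      (∑ i ∈ Finset.range n, E.indicator (fun _ => (1:ℝ)) (T^[i] x)) / n) atTop (𝓝 cr)) :
    0 < liminf (fun n : ℕ =>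
      (∑ n' ∈ Finset.range n,
          ({p : ℕ | (p : ℝ) < δ * n}.indicator (fun _ => (1 : ℝ)) n') *
            (E.indicator (fun _ => (1 : ℝ)) (T^[n - n'] x))) / (δ * n)) atTop := by
  classical
  set ind : X → ℝ := fun y => E.indicator (fun _ => (1:ℝ)) y with hinddef
  have hind0 : ∀ y, 0 ≤ ind y := fun y => by
    by_cases hy : y ∈ E <;> simp [hinddef, hy]
  have hind1 : ∀ y, ind y ≤ 1 := fun y => by
    by_cases hy : y ∈ E <;> simp [hinddef, hy]
  set s : ℕ → ℝ := fun n => ∑ i ∈ Finset.range n, ind (T^[i] x) with hsdef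
  set W : ℕ → ℝ := fun n => ∑ n' ∈ Finset.range n,
      ({p : ℕ | (p : ℝ) < δ * n}.indicator (fun _ => (1 : ℝ)) n') * (ind (T^[n - n'] x))
    with hWdef
  -- the splitting identity
  have hiden : ∀ n M : ℕ, M ≤ n+1 →
      ∑ n' ∈ Finset.range M, ind (T^[n - n'] x) = s (n+1) - s (n+1-M) := by
    intro n M hM
    have h1 := Finset.sum_range_add (f := fun i => ind (T^[i] x)) (n+1-M) M
    rw [show (n+1-M)+M = n+1 by omega] at h1
    have h2 : ∑ i ∈ Finset.range M, ind (T^[(n+1-M)+i] x)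
        = ∑ n' ∈ Finset.range M, ind (T^[n - n'] x) := by
      rw [← Finset.sum_range_reflect]
      refine Finset.sum_congr rfl fun j hj => ?_
      have hj' := Finset.mem_range.mp hj
      congr 2
      omega
    rw [hsdef]
    simp only []
    rw [h1, h2]
    ring
  -- lower bound for W
  have hWge : ∀ n : ℕ, 1 ≤ n → s (n+1) - s (n+1-⌊δ*(n:ℝ)⌋₊) ≤ W n := by
    intro n hn
    set M := ⌊δ*(n:ℝ)⌋₊ with hMdef
    have hn0 : (0:ℝ) < n := by exact_mod_cast hn
    have hM1 : (M:ℝ) ≤ δ * n := Nat.floor_le (by positivity)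
    have hMn : M ≤ n := by
      have : (M:ℝ) < n := lt_of_le_of_lt hM1 (by nlinarith)
      exact_mod_cast this.le
    rw [← hiden n M (by omega)]
    have hterm : ∀ n' ∈ Finset.range M,
        ind (T^[n - n'] x) =
          ({p : ℕ | (p : ℝ) < δ * n}.indicator (fun _ => (1 : ℝ)) n') * ind (T^[n - n'] x) := by
      intro n' hn'
      have hn'M : (n' : ℝ) < M := by exact_mod_cast Finset.mem_range.mp hn'
      rw [Set.indicator_of_mem (by exact lt_of_lt_of_le hn'M hM1), one_mul]
    rw [Finset.sum_congr rfl hterm]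
    refine Finset.sum_le_sum_of_subset_of_nonneg
      (Finset.range_subset_range.mpr hMn) fun i _ _ => ?_
    exact mul_nonneg (Set.indicator_nonneg (fun _ _ => zero_le_one) _) (hind0 _)
  -- upper bound for W (for coboundedness)
  have hWle : ∀ n : ℕ, W n ≤ n := by
    intro n
    calc W n ≤ ∑ _n' ∈ Finset.range n, (1:ℝ) := by
          refine Finset.sum_le_sum fun i _ => ?_
          calc ({p : ℕ | (p : ℝ) < δ * n}.indicator (fun _ => (1 : ℝ)) i) * ind (T^[n - i] x)
              ≤ 1 * 1 := by
                refine mul_le_mul ?_ (hind1 _) (hind0 _) zero_le_one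
                by_cases hi : i ∈ {p : ℕ | (p : ℝ) < δ * n} <;> simp [hi]
          _ = 1 := by norm_num
    _ = n := by simp
  -- the length of the window tends to infinity
  have hφ : Tendsto (fun n : ℕ => n + 1 - ⌊δ*(n:ℝ)⌋₊) atTop atTop := by
    rw [tendsto_atTop]
    intro b
    filter_upwards [eventually_ge_atTop ⌈(b:ℝ)/(1-δ)⌉₊] with n hn
    have hn' : (b:ℝ)/(1-δ) ≤ n := le_trans (Nat.le_ceil _) (by exact_mod_cast hn)
    have h1 : (b:ℝ) ≤ (1-δ) * n := by
      rw [div_le_iff₀ (by linarith)] at hn'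
      linarith
    have h2 : (⌊δ*(n:ℝ)⌋₊ : ℝ) ≤ δ * n := Nat.floor_le (by positivity)
    have h3 : (b:ℝ) + ⌊δ*(n:ℝ)⌋₊ ≤ n := by linarith
    have h4 : b + ⌊δ*(n:ℝ)⌋₊ ≤ n := by exact_mod_cast h3
    omega
  -- quantitative estimates
  set η : ℝ := cr * δ / 100 with hηdef
  have hη : 0 < η := by positivity
  have h1 : ∀ᶠ k : ℕ in atTop, cr - η < s k / k :=
    hconv.eventually_const_lt (by linarith)
  have h2 : ∀ᶠ k : ℕ in atTop, s k / k < cr + η :=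
    hconv.eventually_lt_const (by linarith)
  have h1' : ∀ᶠ n : ℕ in atTop, cr - η < s (n+1) / ((n+1 : ℕ) : ℝ) :=
    (tendsto_add_atTop_nat 1).eventually h1
  have h2' : ∀ᶠ n : ℕ in atTop,
      s (n+1-⌊δ*(n:ℝ)⌋₊) / ((n+1-⌊δ*(n:ℝ)⌋₊ : ℕ) : ℝ) < cr + η :=
    hφ.eventually h2
  have hφ1 : ∀ᶠ n : ℕ in atTop, 1 ≤ n + 1 - ⌊δ*(n:ℝ)⌋₊ := hφ.eventually_ge_atTop 1
  have hδn8 : ∀ᶠ n : ℕ in atTop, 8 ≤ δ * n := by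
    filter_upwards [eventually_ge_atTop ⌈(8:ℝ)/δ⌉₊] with n hn
    have : (8:ℝ)/δ ≤ n := le_trans (Nat.le_ceil _) (by exact_mod_cast hn)
    rw [div_le_iff₀ hδ0] at this
    linarith
  have hev : ∀ᶠ n : ℕ in atTop, cr/2 ≤ W n / (δ * n) := by
    filter_upwards [h1', h2', hφ1, hδn8, eventually_ge_atTop 1] with n hlow hup hphi1 hd8 hn1
    set M := ⌊δ*(n:ℝ)⌋₊ with hMdef
    have hn0 : (0:ℝ) < n := by exact_mod_cast hn1
    have hδn0 : (0:ℝ) < δ * n := by positivity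
    have hM1 : (M:ℝ) ≤ δ * n := Nat.floor_le (by positivity)
    have hM2 : δ * n < M + 1 := Nat.lt_floor_add_one _
    have hMn : M ≤ n := by
      have : (M:ℝ) < n := lt_of_le_of_lt hM1 (by nlinarith)
      exact_mod_cast this.le
    have hφcast : ((n + 1 - M : ℕ) : ℝ) = (n:ℝ) + 1 - M := by
      have hMn1 : M ≤ n + 1 := by omega
      push_cast [Nat.cast_sub hMn1]
      ring
    have hφpos : (0:ℝ) < ((n + 1 - M : ℕ) : ℝ) := by
      exact_mod_cast Nat.lt_of_lt_of_le Nat.zero_lt_one hphi1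
    have hlow' : (cr - η) * ((n:ℝ)+1) < s (n+1) := by
      rw [lt_div_iff₀ (by positivity : (0:ℝ) < ((n+1:ℕ):ℝ))] at hlow
      calc (cr - η) * ((n:ℝ)+1) = (cr - η) * ((n+1:ℕ):ℝ) := by push_cast; ring
      _ < s (n+1) := hlow
    have hup' : s (n+1-M) < (cr + η) * ((n:ℝ)+1-(M:ℝ)) := by
      rw [div_lt_iff₀ hφpos] at hup
      calc s (n+1-M) < (cr + η) * ((n+1-M:ℕ):ℝ) := hup
      _ = (cr + η) * ((n:ℝ)+1-(M:ℝ)) := by rw [hφcast]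
    have hW := hWge n hn1
    have e2 : (cr-η)*((n:ℝ)+1) - (cr+η)*((n:ℝ)+1-(M:ℝ)) ≥ cr*(M:ℝ) - 2*η*((n:ℝ)+1) := by
      nlinarith [mul_nonneg hη.le (Nat.cast_nonneg (α := ℝ) M)]
    have e3 : cr*(M:ℝ) ≥ cr*(δ*(n:ℝ)) - cr := by
      nlinarith [mul_le_mul_of_nonneg_left (by linarith : δ*(n:ℝ) - 1 ≤ (M:ℝ)) hcr.le]
    have e4 : 2*η*((n:ℝ)+1) ≤ cr*(δ*(n:ℝ))/25 := by
      rw [hηdef]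
      nlinarith [mul_pos hcr hδ0, hn0]
    have e5 : cr ≤ cr*(δ*(n:ℝ))/8 := by
      nlinarith [mul_le_mul_of_nonneg_left hd8 hcr.le]
    rw [le_div_iff₀ hδn0]
    have : cr/2*(δ*(n:ℝ)) ≤ cr*(δ*(n:ℝ)) - cr - cr*(δ*(n:ℝ))/25 := by linarith
    linarith
  -- conclude
  have hub : ∀ᶠ n : ℕ in atTop, W n / (δ * n) ≤ 1/δ := by
    filter_upwards [eventually_ge_atTop 1] with n hn1
    have hn0 : (0:ℝ) < n := by exact_mod_cast hn1
    have hδn0 : (0:ℝ) < δ * n := by positivity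
    calc W n / (δ * n) ≤ (n:ℝ) / (δ * n) := by
          gcongr
          exact hWle n
    _ = 1/δ := by
          field_simp
  have hcob : IsCoboundedUnder (· ≥ ·) atTop (fun n : ℕ => W n / (δ * n)) :=
    isCoboundedUnder_ge_of_eventually_le atTop hub
  calc (0:ℝ) < cr/2 := by positivity
  _ ≤ liminf (fun n : ℕ => W n / (δ * n)) atTop := le_liminf_of_le hcob hev

end Stmt7Aux

/-- The set of points visiting `E` in the windows `(n(1−δ), n]` with positive lower frequency
has measure at least `m(E)`. -/
theorem stmt7 {X : Type*} [MeasurableSpace X] (m : Measure X) [IsProbabilityMeasure m]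
    (T : X → X) (hT : MeasurePreserving T m m)
    (E : Set X) (hE : MeasurableSet E)
    (δ : ℝ) (hδ0 : 0 < δ) (hδ1 : δ < 1)
    (Estar : Set X)
    (hEstar : Estar = {x : X | 0 < Filter.liminf
      (fun n : ℕ =>
        (∑ n' ∈ Finset.range n,
            ({p : ℕ | (p : ℝ) < δ * n}.indicator (fun _ => (1 : ℝ)) n') *
              (E.indicator (fun _ => (1 : ℝ)) (T^[n - n'] x))) / (δ * n))
      atTop}) :
    m E ≤ m Estar := by
  classical
  set f : X → ℝ≥0∞ := E.indicator (fun _ => (1:ℝ≥0∞)) with hfdef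
  have hf : Measurable f := measurable_const.indicator hE
  have hf1 : ∀ x, f x ≤ 1 := fun x => by
    by_cases hx : x ∈ E <;> simp [hfdef, hx]
  have hfint : ∫⁻ x, f x ∂m = m E := by
    rw [hfdef]
    rw [show (fun x => E.indicator (fun _ => (1:ℝ≥0∞)) x) = E.indicator (fun _ => (1:ℝ≥0∞))
      from rfl]
    rw [lintegral_indicator hE, setLIntegral_one]
  have hae := Stmt7Aux.ae_tendsto m hT hf hf1
  have hEbar : m E ≤ ∫⁻ x, Stmt7Aux.fbar T f x ∂m := by
    rw [← hfint]
    exact (Stmt7Aux.lintegral_le_flo m hT hf hf1).trans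
      (lintegral_mono fun x => Stmt7Aux.flo_le_fbar x)
  set G : Set X := {x | 0 < Stmt7Aux.fbar T f x} with hGdef
  have hGmeas : MeasurableSet G :=
    measurableSet_lt measurable_const (Stmt7Aux.measurable_fbar hT.measurable hf)
  have hGbound : ∫⁻ x, Stmt7Aux.fbar T f x ∂m ≤ m G := by
    have hpt : ∀ x, Stmt7Aux.fbar T f x ≤ G.indicator (fun _ => (1:ℝ≥0∞)) x := by
      intro x
      by_cases hx : x ∈ G
      · rw [Set.indicator_of_mem hx]
        exact Stmt7Aux.fbar_le_one hf1 x
      · rw [Set.indicator_of_notMem hx]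
        exact not_lt.mp hx
    calc ∫⁻ x, Stmt7Aux.fbar T f x ∂m ≤ ∫⁻ x, G.indicator (fun _ => (1:ℝ≥0∞)) x ∂m :=
          lintegral_mono hpt
    _ = m G := by rw [lintegral_indicator hGmeas, setLIntegral_one]
  set C : Set X := {x | Tendsto (fun n => Stmt7Aux.bA T f n x) atTop
      (𝓝 (Stmt7Aux.fbar T f x))} with hCdef
  have hC : m Cᶜ = 0 := by
    have := ae_iff.mp hae
    rw [hCdef, Set.compl_setOf]
    exact this
  have hsub : G ∩ C ⊆ Estar := by
    rintro x ⟨hxG, hxC⟩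
    rw [hEstar]
    have hct : Stmt7Aux.fbar T f x ≠ ⊤ :=
      ((Stmt7Aux.fbar_le_one hf1 x).trans_lt (by simp)).ne
    have hxG' : 0 < Stmt7Aux.fbar T f x := hxG
    have hcr : 0 < (Stmt7Aux.fbar T f x).toReal := ENNReal.toReal_pos hxG'.ne' hct
    have htoReal : Tendsto (fun n => (Stmt7Aux.bA T f n x).toReal) atTop
        (𝓝 (Stmt7Aux.fbar T f x).toReal) :=
      (ENNReal.tendsto_toReal hct).comp hxC
    have heq : (fun n : ℕ => (Stmt7Aux.bA T f n x).toReal) = fun n : ℕ =>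
        (∑ i ∈ Finset.range n, E.indicator (fun _ => (1:ℝ)) (T^[i] x)) / n := by
      funext n
      rw [Stmt7Aux.bA, ENNReal.toReal_div]
      congr 1
      rw [Stmt7Aux.bS, ENNReal.toReal_sum (fun i _ => ((hf1 _).trans_lt (by simp)).ne)]
      refine Finset.sum_congr rfl fun i _ => ?_
      by_cases hy : T^[i] x ∈ E <;> simp [hfdef, hy]
    rw [heq] at htoReal
    exact Stmt7Aux.window_liminf (T := T) E x hδ0 hδ1 hcr htoReal
  calc m E ≤ m G := hEbar.trans hGbound
  _ ≤ m ((G ∩ C) ∪ Cᶜ) := by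
      refine measure_mono fun x hx => ?_
      by_cases hc : x ∈ C
      · exact Or.inl ⟨hx, hc⟩
      · exact Or.inr hc
  _ ≤ m (G ∩ C) + m Cᶜ := measure_union_le _ _
  _ = m (G ∩ C) := by rw [hC, add_zero]
  _ ≤ m Estar := measure_mono hsub
end

section
/- Let f : ℤ^d → ℝ≥0 be subadditive with c₁‖λ‖ ≤ f(λ) ≤ c₂‖λ‖ (0 < c₁ ≤ c₂) and let φ : ℝ^d → ℝ≥0 be the asymptotically equivalent homogeneous subadditive function (φ(λ) = inf_{n≥1} f(nλ)/n on ℤ^d, extended by homogeneity and continuity). Then f is inner in the following sense: for every ε > 0 there is R < ∞ such that every λ ∈ ℤ^d can be written as λ = λ₁ + … + λ_n with f(λ_i) ≤ R for all i and f(λ₁) + … + f(λ_n) ≤ (1+ε)·f(λ). -/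
/-- The Euclidean norm of a lattice point of `ℤ^d`. -/
noncomputable def euclNormZ {d : ℕ} (lam : Fin d → ℤ) : ℝ :=
  ‖(WithLp.equiv 2 (Fin d → ℝ)).symm (fun i => (lam i : ℝ))‖

/-- The Euclidean norm on `ℝ^d`. -/
noncomputable def euclNormR {d : ℕ} (v : Fin d → ℝ) : ℝ :=
  ‖(WithLp.equiv 2 (Fin d → ℝ)).symm v‖

section Helpers

variable {d : ℕ}

lemma enR_nonneg (v : Fin d → ℝ) : 0 ≤ euclNormR v := norm_nonneg _

lemma euclNormZ_eq (lam : Fin d → ℤ) : euclNormZ lam = euclNormR (fun i => (lam i : ℝ)) := rfl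

lemma euclNormZ_nonneg (lam : Fin d → ℤ) : 0 ≤ euclNormZ lam := norm_nonneg _

lemma euclNormZ_zero : euclNormZ (0 : Fin d → ℤ) = 0 := by
  unfold euclNormZ
  have : (fun i => (((0 : Fin d → ℤ) i : ℤ) : ℝ)) = (0 : Fin d → ℝ) := by funext i; simp
  rw [this]
  simp

lemma enR_add (v w : Fin d → ℝ) : euclNormR (v + w) ≤ euclNormR v + euclNormR w := by
  unfold euclNormR
  rw [show (WithLp.equiv 2 (Fin d → ℝ)).symm (v+w) = (WithLp.equiv 2 (Fin d → ℝ)).symm v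
    + (WithLp.equiv 2 (Fin d → ℝ)).symm w by simp]
  exact norm_add_le _ _

lemma enR_neg (v : Fin d → ℝ) : euclNormR (-v) = euclNormR v := by
  unfold euclNormR
  rw [show (WithLp.equiv 2 (Fin d → ℝ)).symm (-v) = -(WithLp.equiv 2 (Fin d → ℝ)).symm v by simp]
  exact norm_neg _

lemma enR_smul (t : ℝ) (v : Fin d → ℝ) : euclNormR (t • v) = |t| * euclNormR v := by
  unfold euclNormR
  rw [show (WithLp.equiv 2 (Fin d → ℝ)).symm (t • v) = t • (WithLp.equiv 2 (Fin d → ℝ)).symm v by simp]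
  rw [norm_smul, Real.norm_eq_abs]

lemma enR_coord (v : Fin d → ℝ) (j : Fin d) : |v j| ≤ euclNormR v := by
  unfold euclNormR
  rw [EuclideanSpace.norm_eq]
  rw [show |v j| = Real.sqrt ((v j)^2) from (Real.sqrt_sq_eq_abs _).symm]
  apply Real.sqrt_le_sqrt
  calc (v j)^2 = ∑ i ∈ {j}, (v i)^2 := by simp
    _ ≤ ∑ i : Fin d, (v i)^2 := by
        apply Finset.sum_le_sum_of_subset_of_nonneg (Finset.subset_univ _)
        intro i _ _; positivity
    _ = ∑ i : Fin d, ‖(WithLp.equiv 2 (Fin d → ℝ)).symm v i‖^2 := by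
        apply Finset.sum_congr rfl; intro i _; rw [Real.norm_eq_abs, sq_abs]; rfl

lemma enR_le_of_bound (v : Fin d → ℝ) (a : ℝ) (ha : 0 ≤ a) (h : ∀ j, |v j| ≤ a) :
    euclNormR v ≤ a * Real.sqrt d := by
  unfold euclNormR
  rw [EuclideanSpace.norm_eq]
  have hsum : ∑ i : Fin d, ‖(WithLp.equiv 2 (Fin d → ℝ)).symm v i‖^2 ≤ (d : ℝ) * a^2 := by
    calc ∑ i : Fin d, ‖(WithLp.equiv 2 (Fin d → ℝ)).symm v i‖^2 ≤ ∑ _i : Fin d, a^2 := by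
          apply Finset.sum_le_sum; intro i _
          rw [Real.norm_eq_abs, show ((WithLp.equiv 2 (Fin d → ℝ)).symm v) i = v i from rfl]
          exact sq_le_sq' (by linarith [h i, abs_nonneg (v i)]) (by linarith [h i, le_abs_self (v i)])
      _ = (d : ℝ) * a^2 := by simp [mul_comm]
  calc Real.sqrt (∑ i : Fin d, ‖(WithLp.equiv 2 (Fin d → ℝ)).symm v i‖^2)
      ≤ Real.sqrt ((d:ℝ) * a^2) := Real.sqrt_le_sqrt hsum
    _ = a * Real.sqrt d := by
        rw [Real.sqrt_mul (by positivity), Real.sqrt_sq ha, mul_comm]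

variable (φ : (Fin d → ℝ) → ℝ)
  (hφ0 : ∀ v, 0 ≤ φ v)
  (hφsub : ∀ v w : Fin d → ℝ, φ (v + w) ≤ φ v + φ w)
  (hφhom : ∀ t : ℝ, 0 < t → ∀ v : Fin d → ℝ, φ (t • v) = t * φ v)

include hφhom in
lemma phi_zero : φ 0 = 0 := by
  have h := hφhom 2 (by norm_num) 0
  rw [smul_zero] at h; linarith

include hφsub hφhom in
lemma phi_finsum {ι : Type*} (s : Finset ι) (g : ι → Fin d → ℝ) :
    φ (∑ j ∈ s, g j) ≤ ∑ j ∈ s, φ (g j) := by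
  classical
  induction s using Finset.induction with
  | empty => simp [phi_zero φ hφhom]
  | @insert _ _ h ih =>
    rw [Finset.sum_insert h, Finset.sum_insert h]
    exact le_trans (hφsub _ _) (by linarith)

include hφhom in
lemma phi_single (j : Fin d) (t : ℝ) :
    φ (Pi.single j t) ≤ |t| * max (φ (Pi.single j 1)) (φ (-(Pi.single j (1:ℝ)))) := by
  rcases lt_trichotomy t 0 with ht | ht | ht
  · have h : (Pi.single j t : Fin d → ℝ) = (-t) • (-(Pi.single j (1:ℝ) : Fin d → ℝ)) := by
      funext i
      by_cases hij : i = j <;> simp [hij, Pi.single_apply]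
    rw [h, hφhom (-t) (by linarith), abs_of_neg ht]
    exact mul_le_mul_of_nonneg_left (le_max_right _ _) (by linarith)
  · simp [ht, phi_zero φ hφhom]
  · have h : (Pi.single j t : Fin d → ℝ) = t • (Pi.single j (1:ℝ) : Fin d → ℝ) := by
      funext i
      by_cases hij : i = j <;> simp [hij, Pi.single_apply]
    rw [h, hφhom t ht, abs_of_pos ht]
    exact mul_le_mul_of_nonneg_left (le_max_left _ _) (by linarith)

include hφ0 hφsub hφhom in
lemma phi_lip (v : Fin d → ℝ) :
    φ v ≤ (1 + ∑ j : Fin d, max (φ (Pi.single j 1)) (φ (-(Pi.single j (1:ℝ))))) * euclNormR v := by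
  have hN : 0 ≤ euclNormR v := norm_nonneg _
  have h2 : φ v ≤ ∑ j : Fin d, φ (Pi.single j (v j)) := by
    have := phi_finsum φ hφsub hφhom Finset.univ (fun j => (Pi.single j (v j) : Fin d → ℝ))
    rwa [Finset.univ_sum_single v] at this
  have h3 : ∀ j : Fin d, φ (Pi.single j (v j)) ≤
      euclNormR v * max (φ (Pi.single j 1)) (φ (-(Pi.single j (1:ℝ)))) := by
    intro j
    refine le_trans (phi_single φ hφhom j (v j)) ?_
    exact mul_le_mul_of_nonneg_right (enR_coord v j) (le_max_of_le_left (hφ0 _))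
  calc φ v ≤ ∑ j : Fin d, euclNormR v * max (φ (Pi.single j 1)) (φ (-(Pi.single j (1:ℝ)))) :=
        le_trans h2 (Finset.sum_le_sum fun j _ => h3 j)
    _ = (∑ j : Fin d, max (φ (Pi.single j 1)) (φ (-(Pi.single j (1:ℝ))))) * euclNormR v := by
        rw [← Finset.mul_sum, mul_comm]
    _ ≤ _ := mul_le_mul_of_nonneg_right (by linarith) hN

end Helpers

set_option maxHeartbeats 2000000

/-- A subadditive `f : ℤ^d → ℝ≥0`, bi-Lipschitz to the Euclidean norm and asymptotically
equivalent to a positively homogeneous subadditive `φ : ℝ^d → ℝ≥0`, is inner: for every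
`ε > 0` there is `R < ∞` such that every `λ` decomposes as `λ = λ₁ + … + λ_n` with
`f(λᵢ) ≤ R` and `∑ f(λᵢ) ≤ (1+ε) f(λ)`. -/
theorem stmt16 {d : ℕ} (c₁ c₂ : ℝ) (hc₁ : 0 < c₁) (hc : c₁ ≤ c₂)
    (f : (Fin d → ℤ) → ℝ)
    (hf0 : ∀ lam, 0 ≤ f lam)
    (hsub : ∀ x y : Fin d → ℤ, f (x + y) ≤ f x + f y)
    (hlow : ∀ lam : Fin d → ℤ, lam ≠ 0 → c₁ * euclNormZ lam ≤ f lam)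
    (hup : ∀ lam : Fin d → ℤ, lam ≠ 0 → f lam ≤ c₂ * euclNormZ lam)
    (φ : (Fin d → ℝ) → ℝ)
    (hφ0 : ∀ v, 0 ≤ φ v)
    (hφsub : ∀ v w : Fin d → ℝ, φ (v + w) ≤ φ v + φ w)
    (hφhom : ∀ t : ℝ, 0 < t → ∀ v : Fin d → ℝ, φ (t • v) = t * φ v)
    (hasymp : ∀ ε : ℝ, 0 < ε → ∃ R : ℝ, ∀ lam : Fin d → ℤ,
      R ≤ euclNormZ lam → |f lam - φ (fun i => (lam i : ℝ))| ≤ ε * euclNormZ lam) :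
    ∀ ε : ℝ, 0 < ε → ∃ R : ℝ, ∀ lam : Fin d → ℤ,
      ∃ (n : ℕ) (pieces : Fin n → Fin d → ℤ),
        (∑ i, pieces i) = lam ∧
        (∀ i, f (pieces i) ≤ R) ∧
        (∑ i, f (pieces i)) ≤ (1 + ε) * f lam := by
  intro ε hε
  classical
  set δ : ℝ := ε * c₁ / 4 with hδdef
  clear_value δ
  have hδ : 0 < δ := by rw [hδdef]; positivity
  obtain ⟨R₀, hR₀⟩ := hasymp δ hδ
  set sd : ℝ := Real.sqrt d with hsddef
  clear_value sd
  have hsd : 0 ≤ sd := by rw [hsddef]; positivity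
  set C : ℝ := 1 + ∑ j : Fin d, max (φ (Pi.single j 1)) (φ (-(Pi.single j (1:ℝ)))) with hCdef
  clear_value C
  have hC1 : 1 ≤ C := by
    have : 0 ≤ ∑ j : Fin d, max (φ (Pi.single j 1)) (φ (-(Pi.single j (1:ℝ)))) :=
      Finset.sum_nonneg fun j _ => le_max_of_le_left (hφ0 _)
    rw [hCdef]; linarith
  have hlip : ∀ v, φ v ≤ C * euclNormR v := fun v => hCdef ▸ phi_lip φ hφ0 hφsub hφhom v
  set M : ℝ := max R₀ 1 with hMdef
  clear_value M
  have hM1 : 1 ≤ M := hMdef ▸ le_max_right _ _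
  have hMR : R₀ ≤ M := hMdef ▸ le_max_left _ _
  set L : ℝ := max (2 * (M + 2*sd)) (8*(C+δ)*sd/(ε*c₁) + 1) with hLdef
  clear_value L
  have hL1 : 2 * (M + 2*sd) ≤ L := hLdef ▸ le_max_left _ _
  have hLpos : 0 < L := by nlinarith
  have hL2 : 8*(C+δ)*sd ≤ L * (ε*c₁) := by
    have h : 8*(C+δ)*sd/(ε*c₁) + 1 ≤ L := hLdef ▸ le_max_right _ _
    have hec : 0 < ε * c₁ := by positivity
    have h' : 8*(C+δ)*sd/(ε*c₁) ≤ L := by linarith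
    calc 8*(C+δ)*sd = (8*(C+δ)*sd/(ε*c₁)) * (ε*c₁) := by field_simp
      _ ≤ L * (ε*c₁) := mul_le_mul_of_nonneg_right h' hec.le
  refine ⟨max (c₂ * (L + 2*sd)) (f 0), fun lam => ?_⟩
  set N : ℝ := euclNormZ lam with hNdef
  clear_value N
  have hN0 : 0 ≤ N := hNdef ▸ euclNormZ_nonneg lam
  by_cases hbig : L ≤ N
  swap
  · -- small case : one piece
    refine ⟨1, fun _ => lam, by simp, ?_, ?_⟩
    · intro i
      by_cases h0 : lam = 0
      · rw [h0]; exact le_max_right _ _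
      · refine le_trans (le_trans (hup lam h0) ?_) (le_max_left _ _)
        rw [← hNdef]
        have : N ≤ L + 2*sd := by linarith [not_le.mp hbig]
        nlinarith
    · have := hf0 lam
      simp only [Finset.univ_unique, Finset.sum_const, Finset.card_singleton, one_smul]
      nlinarith
  · -- big case
    have hNpos : 0 < N := lt_of_lt_of_le hLpos hbig
    have hlamne : lam ≠ 0 := by
      intro h0; rw [h0] at hNdef; rw [euclNormZ_zero] at hNdef; linarith
    set n : ℕ := ⌈N / L⌉₊ with hndef
    clear_value n
    have hn1 : 1 ≤ n := by
      rw [hndef]; exact Nat.one_le_ceil_iff.mpr (div_pos hNpos hLpos)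
    have hnpos : (0:ℝ) < (n:ℝ) := by exact_mod_cast hn1
    have hnlo : N / L ≤ (n:ℝ) := hndef ▸ Nat.le_ceil _
    have hone : (1:ℝ) ≤ N / L := (one_le_div hLpos).mpr hbig
    have hnhi : (n:ℝ) ≤ 2 * N / L := by
      have h := Nat.ceil_lt_add_one (le_of_lt (div_pos hNpos hLpos))
      have h' : (n:ℝ) < N/L + 1 := by rw [hndef]; exact_mod_cast h
      calc (n:ℝ) ≤ N/L + N/L := by linarith
        _ = 2*N/L := by ring
    have hnL : (n:ℝ) * L ≤ 2 * N := by
      have := (le_div_iff₀ hLpos).mp hnhi; linarith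
    have hNn_le : N / (n:ℝ) ≤ L := by
      rw [div_le_iff₀ hnpos]
      calc N = (N/L)*L := by field_simp
        _ ≤ (n:ℝ)*L := mul_le_mul_of_nonneg_right hnlo hLpos.le
        _ = L * n := by ring
    have hNn_ge : L / 2 ≤ N / (n:ℝ) := by
      rw [le_div_iff₀ hnpos]
      linarith
    -- the partial sums
    set g : ℕ → Fin d → ℤ := fun k j => ((k : ℤ) * lam j) / (n : ℤ) with hgdef
    clear_value g
    have hnZ : ((n:ℤ)) ≠ 0 := Int.natCast_ne_zero.mpr (by omega)
    have hnZpos : (0:ℤ) < (n:ℤ) := by exact_mod_cast hn1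
    have hkey : ∀ k : ℕ, ∀ j : Fin d,
        ((k:ℝ) * (lam j : ℝ))/(n:ℝ) - 1 < ((g k j : ℤ) : ℝ) ∧
        ((g k j : ℤ) : ℝ) ≤ ((k:ℝ) * (lam j : ℝ))/(n:ℝ) := by
      intro k j
      have hfold : g k j = ((k:ℤ) * lam j) / (n:ℤ) := by rw [hgdef]
      have h := Int.mul_ediv_add_emod ((k:ℤ) * lam j) (n:ℤ)
      have h2 := Int.emod_nonneg ((k:ℤ) * lam j) hnZ
      have h3 := Int.emod_lt_of_pos ((k:ℤ) * lam j) hnZpos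
      have hq1 : (n:ℤ) * g k j ≤ (k:ℤ) * lam j := by rw [hfold]; linarith
      have hq2 : (k:ℤ) * lam j < (n:ℤ) * g k j + (n:ℤ) := by rw [hfold]; linarith
      have r1 : (n:ℝ) * ((g k j : ℤ):ℝ) ≤ (k:ℝ) * (lam j : ℝ) := by exact_mod_cast hq1
      have r2 : (k:ℝ) * (lam j : ℝ) < (n:ℝ) * ((g k j : ℤ):ℝ) + (n:ℝ) := by exact_mod_cast hq2
      constructor
      · rw [sub_lt_iff_lt_add, div_lt_iff₀ hnpos]; linarith
      · rw [le_div_iff₀ hnpos]; linarith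
    set pieces : Fin n → Fin d → ℤ := fun i => g (i.1+1) - g i.1 with hpdef
    clear_value pieces
    have hsum : ∑ i : Fin n, pieces i = lam := by
      have ht : ∑ i : Fin n, (fun k => g (k+1) - g k) i.1 = ∑ k ∈ Finset.range n, (g (k+1) - g k) :=
        Fin.sum_univ_eq_sum_range (fun k => g (k+1) - g k) n
      have h : ∑ i : Fin n, pieces i = g n - g 0 := by
        rw [hpdef]
        rw [show (fun i : Fin n => g (i.1+1) - g i.1) = fun i : Fin n => (fun k => g (k+1) - g k) i.1 from rfl]
        rw [ht, Finset.sum_range_sub]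
      rw [h]
      have hg0 : g 0 = 0 := by funext j; rw [hgdef]; simp
      have hgn : g n = lam := by
        funext j; rw [hgdef]
        exact Int.mul_ediv_cancel_left _ hnZ
      rw [hg0, hgn, sub_zero]
    -- coordinate bounds of pieces
    have hpc : ∀ i : Fin n, ∀ j : Fin d,
        |((pieces i j : ℤ):ℝ) - (lam j : ℝ)/(n:ℝ)| ≤ 2 := by
      intro i j
      have h1 := hkey i.1 j
      have h2 := hkey (i.1+1) j
      have hcast : ((pieces i j : ℤ):ℝ) = ((g (i.1+1) j : ℤ):ℝ) - ((g i.1 j : ℤ):ℝ) := by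
        rw [hpdef]; push_cast [Pi.sub_apply]; ring
      have he : (((i.1+1:ℕ)):ℝ) * (lam j:ℝ)/(n:ℝ) = (i.1:ℝ) * (lam j:ℝ)/(n:ℝ) + (lam j:ℝ)/(n:ℝ) := by
        push_cast; ring
      rw [abs_le, hcast]
      rw [he] at h2
      constructor <;> linarith
    -- norm bounds of pieces
    have hML : M ≤ L/2 - 2*sd := by linarith
    have hperpiece : ∀ i : Fin n,
        f (pieces i) ≤ (n:ℝ)⁻¹ * (φ (fun j => (lam j : ℝ)) + δ * N) + 2*C*sd + 2*δ*sd ∧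
        f (pieces i) ≤ c₂ * (L + 2*sd) := by
      intro i
      set w : Fin d → ℝ := fun j => ((pieces i j : ℤ) : ℝ) with hwdef
      clear_value w
      have hwz : euclNormZ (pieces i) = euclNormR w := by rw [hwdef]; exact euclNormZ_eq _
      set vlam : Fin d → ℝ := fun j => ((lam j : ℤ) : ℝ) with hvdef
      clear_value vlam
      have hNv : N = euclNormR vlam := by rw [hNdef, hvdef]; exact euclNormZ_eq lam
      set u : Fin d → ℝ := ((n:ℝ)⁻¹ • vlam) with hudef
      clear_value u
      have hNu : euclNormR u = N / (n:ℝ) := by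
        rw [hudef, enR_smul, abs_of_pos (inv_pos.mpr hnpos), ← hNv, inv_mul_eq_div]
      have hdiff : euclNormR (w - u) ≤ 2 * sd := by
        have h := enR_le_of_bound (w - u) 2 (by norm_num) (fun j => by
          have h := hpc i j
          have he : (w - u) j = ((pieces i j : ℤ):ℝ) - (lam j : ℝ)/(n:ℝ) := by
            simp only [Pi.sub_apply, hwdef, hudef, Pi.smul_apply, hvdef, smul_eq_mul]
            rw [inv_mul_eq_div]
          rw [he]; exact h)
        rw [← hsddef] at h; linarith
      have hwu : u + (w - u) = w := by abel
      have hub : euclNormR w ≤ N/(n:ℝ) + 2*sd := by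
        calc euclNormR w = euclNormR (u + (w - u)) := by rw [hwu]
          _ ≤ euclNormR u + euclNormR (w - u) := enR_add _ _
          _ ≤ N/(n:ℝ) + 2*sd := by rw [hNu]; linarith
      have hlb : N/(n:ℝ) - 2*sd ≤ euclNormR w := by
        have h1 : euclNormR u ≤ euclNormR w + euclNormR (u - w) := by
          calc euclNormR u = euclNormR (w + (u - w)) := by rw [show w + (u-w) = u by abel]
            _ ≤ euclNormR w + euclNormR (u - w) := enR_add _ _
        have h2 : euclNormR (u - w) = euclNormR (w - u) := by
          rw [show u - w = -(w - u) by abel, enR_neg]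
        rw [hNu] at h1; rw [h2] at h1; linarith
      have hge : M ≤ euclNormR w := by linarith
      have hne : pieces i ≠ 0 := by
        intro h0
        rw [← hwz, h0, euclNormZ_zero] at hge
        linarith
      constructor
      swap
      · refine le_trans (hup _ hne) ?_
        rw [hwz]
        nlinarith
      · -- asymptotic bound
        have hasi := hR₀ (pieces i) (by rw [hwz]; linarith)
        rw [hwz] at hasi
        have hphiw : φ w ≤ (n:ℝ)⁻¹ * φ vlam + C * (2*sd) := by
          have hs1 : φ w ≤ φ u + φ (w - u) := by
            calc φ w = φ (u + (w - u)) := by rw [hwu]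
              _ ≤ φ u + φ (w - u) := hφsub _ _
          have hs2 : φ u = (n:ℝ)⁻¹ * φ vlam := by
            rw [hudef]; exact hφhom _ (inv_pos.mpr hnpos) _
          have hs3 : φ (w - u) ≤ C * (2*sd) :=
            le_trans (hlip _) (mul_le_mul_of_nonneg_left hdiff (by linarith))
          exact hs1.trans (hs2 ▸ add_le_add le_rfl hs3)
        have habs : f (pieces i) - φ w ≤ δ * euclNormR w := by
          have he : φ (fun j => ((pieces i j : ℤ):ℝ)) = φ w := by rw [hwdef]
          rw [he] at hasi
          exact le_trans (le_abs_self _) hasi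
        have hfin : f (pieces i) ≤ (n:ℝ)⁻¹ * φ vlam + 2*C*sd + δ * (N/(n:ℝ)) + 2*δ*sd := by
          have hdN : δ * euclNormR w ≤ δ * (N/(n:ℝ) + 2*sd) :=
            mul_le_mul_of_nonneg_left hub hδ.le
          nlinarith
        have hdd : δ * (N/(n:ℝ)) = (n:ℝ)⁻¹ * (δ * N) := by
          rw [div_eq_inv_mul]; ring
        rw [hdd] at hfin
        linarith [hfin]
    -- sum the estimates
    set Φ : ℝ := φ (fun j => ((lam j : ℤ):ℝ)) with hΦdef
    clear_value Φ
    have hsumf : ∑ i : Fin n, f (pieces i) ≤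
        (n:ℝ) * ((n:ℝ)⁻¹ * (Φ + δ * N) + 2*C*sd + 2*δ*sd) := by
      calc ∑ i : Fin n, f (pieces i)
          ≤ ∑ _i : Fin n, ((n:ℝ)⁻¹ * (Φ + δ * N) + 2*C*sd + 2*δ*sd) :=
            Finset.sum_le_sum (fun i _ => (hperpiece i).1)
        _ = (n:ℝ) * ((n:ℝ)⁻¹ * (Φ + δ * N) + 2*C*sd + 2*δ*sd) := by
            rw [Finset.sum_const, Finset.card_univ, Fintype.card_fin, nsmul_eq_mul]
    have hexp : (n:ℝ) * ((n:ℝ)⁻¹ * (Φ + δ * N) + 2*C*sd + 2*δ*sd)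
        = Φ + δ * N + (n:ℝ) * (2*(C+δ)*sd) := by
      field_simp
      ring
    have hphil : Φ ≤ f lam + δ * N := by
      have h := hR₀ lam (by linarith)
      rw [← hNdef] at h
      have h2 := abs_le.mp h
      rw [← hΦdef] at h2
      linarith [h2.2]
    have hterm : (n:ℝ) * (2*(C+δ)*sd) ≤ ε*c₁/2 * N := by
      have h1 : (n:ℝ) * (8*(C+δ)*sd) ≤ (n:ℝ) * (L * (ε*c₁)) :=
        mul_le_mul_of_nonneg_left hL2 hnpos.le
      have h2 : ((n:ℝ) * L) * (ε*c₁) ≤ (2*N) * (ε*c₁) :=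
        mul_le_mul_of_nonneg_right hnL (by positivity)
      nlinarith
    have hflam : c₁ * N ≤ f lam := by rw [hNdef]; exact hlow lam hlamne
    have hεf : ε * (c₁ * N) ≤ ε * f lam := mul_le_mul_of_nonneg_left hflam hε.le
    have hδN : δ * N = ε * c₁ * N / 4 := by rw [hδdef]; ring
    refine ⟨n, pieces, hsum, fun i => le_trans (hperpiece i).2 (le_max_left _ _), ?_⟩
    calc ∑ i : Fin n, f (pieces i)
        ≤ Φ + δ * N + (n:ℝ) * (2*(C+δ)*sd) := by rw [← hexp]; exact hsumf
      _ ≤ (f lam + δ * N) + δ * N + ε*c₁/2 * N := by linarith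
      _ ≤ (1 + ε) * f lam := by nlinarith
end

section
/- Let (X,m) be a probability space with an ergodic measure-preserving ℤ-action generated by T. For measurable E ⊆ X with m(E) > 0 and 0 < δ < 1, and any ε > 0, there exists N ∈ ℕ such that the set E*_N := { x ∈ X : for all n ≥ N, there exists n' with 0 ≤ n' < δn and T^{n−n'} x ∈ E } satisfies m(E*_N) > m(E) − ε. -/
set_option linter.unusedSectionVars false
set_option maxHeartbeats 1200000


open Filter MeasureTheory Set Function Topology
open scoped ENNReal

namespace Stmt18Aux

variable {X : Type*} [MeasurableSpace X]

/-- Birkhoff sums. -/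
noncomputable def bS (T : X → X) (f : X → ℝ) (n : ℕ) (x : X) : ℝ :=
  ∑ k ∈ Finset.range n, f (T^[k] x)

/-- Birkhoff ratios. -/
noncomputable def rS (T : X → X) (f : X → ℝ) (x : X) (n : ℕ) : ℝ := bS T f n x / n

noncomputable def lA (T : X → X) (f : X → ℝ) (x : X) : ℝ := liminf (rS T f x) atTop

noncomputable def lB (T : X → X) (f : X → ℝ) (x : X) : ℝ := limsup (rS T f x) atTop

variable {T : X → X} {f : X → ℝ}

lemma bS_add (T : X → X) (f : X → ℝ) (n k : ℕ) (x : X) :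
    bS T f (n + k) x = bS T f n x + bS T f k (T^[n] x) := by
  unfold bS
  rw [← Finset.sum_range_add_sum_Ico _ (Nat.le_add_right n k),
    Finset.sum_Ico_eq_sum_range, Nat.add_sub_cancel_left]
  congr 1
  refine Finset.sum_congr rfl fun i _ => ?_
  rw [add_comm n i, Function.iterate_add_apply]

lemma bS_one (T : X → X) (f : X → ℝ) (x : X) : bS T f 1 x = f x := by
  simp [bS]

section Bounds

variable (hf0 : ∀ y, 0 ≤ f y) (hf1 : ∀ y, f y ≤ 1)

include hf0 in
lemma bS_nonneg (n : ℕ) (x : X) : 0 ≤ bS T f n x :=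
  Finset.sum_nonneg fun _ _ => hf0 _

include hf1 in
lemma bS_le (n : ℕ) (x : X) : bS T f n x ≤ n := by
  calc bS T f n x ≤ ∑ _k ∈ Finset.range n, (1 : ℝ) :=
        Finset.sum_le_sum fun _ _ => hf1 _
    _ = n := by simp

include hf0 in
lemma rS_nonneg (x : X) (n : ℕ) : 0 ≤ rS T f x n :=
  div_nonneg (bS_nonneg hf0 n x) (Nat.cast_nonneg n)

include hf0 hf1 in
lemma rS_le_one (x : X) (n : ℕ) : rS T f x n ≤ 1 := by
  rcases Nat.eq_zero_or_pos n with rfl | hn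
  · simp [rS]
  · rw [rS, div_le_one (by exact_mod_cast hn)]
    exact bS_le hf1 n x

include hf0 hf1 in
lemma rS_bddAbove (x : X) : IsBoundedUnder (· ≤ ·) atTop (rS T f x) :=
  isBoundedUnder_of ⟨1, fun n => rS_le_one hf0 hf1 x n⟩

include hf0 in
lemma rS_bddBelow (x : X) : IsBoundedUnder (· ≥ ·) atTop (rS T f x) :=
  isBoundedUnder_of ⟨0, fun n => rS_nonneg hf0 x n⟩

include hf0 hf1 in
lemma lA_nonneg (x : X) : 0 ≤ lA T f x :=
  le_liminf_of_le (rS_bddAbove hf0 hf1 x).isCoboundedUnder_ge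
    (Eventually.of_forall fun n => rS_nonneg hf0 x n)

include hf0 hf1 in
lemma lB_le_one (x : X) : lB T f x ≤ 1 :=
  limsup_le_of_le (rS_bddBelow hf0 x).isCoboundedUnder_le
    (Eventually.of_forall fun n => rS_le_one hf0 hf1 x n)

include hf0 hf1 in
lemma lA_le_lB (x : X) : lA T f x ≤ lB T f x :=
  liminf_le_limsup (rS_bddAbove hf0 hf1 x) (rS_bddBelow hf0 x)

include hf0 hf1 in
lemma lA_le_one (x : X) : lA T f x ≤ 1 :=
  (lA_le_lB hf0 hf1 x).trans (lB_le_one hf0 hf1 x)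

include hf0 hf1 in
lemma lB_nonneg (x : X) : 0 ≤ lB T f x :=
  (lA_nonneg hf0 hf1 x).trans (lA_le_lB hf0 hf1 x)

end Bounds

/-- Two `[0,1]`-valued sequences that are eventually arbitrarily close have the same liminf. -/
lemma liminf_eq_of_close {u w : ℕ → ℝ}
    (hu0 : ∀ n, 0 ≤ u n) (hu1 : ∀ n, u n ≤ 1) (hw0 : ∀ n, 0 ≤ w n) (hw1 : ∀ n, w n ≤ 1)
    (h : ∀ c : ℝ, 0 < c → ∀ᶠ n in atTop, |u n - w n| ≤ c) :
    liminf u atTop = liminf w atTop := by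
  have H : ∀ u w : ℕ → ℝ, (∀ n, 0 ≤ u n) → (∀ n, 0 ≤ w n) → (∀ n, w n ≤ 1) →
      (∀ c : ℝ, 0 < c → ∀ᶠ n in atTop, u n ≤ w n + c) →
      liminf u atTop ≤ liminf w atTop := by
    intro u w hu0 hw0 hw1 h
    refine le_of_forall_pos_le_add fun c hc => ?_
    have h1 : ∀ᶠ n in atTop, u n ≤ w n + c := h c hc
    calc liminf u atTop ≤ liminf (fun n => w n + c) atTop :=
          liminf_le_liminf h1
            ((isBoundedUnder_of ⟨0, fun n => hu0 n⟩ : IsBoundedUnder (· ≥ ·) atTop u))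
            ((isBoundedUnder_of ⟨1 + c, fun n => by linarith [hw1 n]⟩).isCoboundedUnder_ge)
      _ = liminf w atTop + c :=
          liminf_add_const atTop w c
            ((isBoundedUnder_of ⟨1, hw1⟩).isCoboundedUnder_ge)
            ((isBoundedUnder_of ⟨0, fun n => hw0 n⟩ : IsBoundedUnder (· ≥ ·) atTop w))
  refine le_antisymm (H u w hu0 hw0 hw1 fun c hc => ?_) (H w u hw0 hu0 hu1 fun c hc => ?_) <;>
    [skip; skip] <;>
    · filter_upwards [h c hc] with n hn
      have := abs_le.1 hn
      linarith [this.1, this.2]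

/-- Two `[0,1]`-valued sequences that are eventually arbitrarily close have the same limsup. -/
lemma limsup_eq_of_close {u w : ℕ → ℝ}
    (hu0 : ∀ n, 0 ≤ u n) (hu1 : ∀ n, u n ≤ 1) (hw0 : ∀ n, 0 ≤ w n) (hw1 : ∀ n, w n ≤ 1)
    (h : ∀ c : ℝ, 0 < c → ∀ᶠ n in atTop, |u n - w n| ≤ c) :
    limsup u atTop = limsup w atTop := by
  have H : ∀ u w : ℕ → ℝ, (∀ n, 0 ≤ u n) → (∀ n, 0 ≤ w n) → (∀ n, w n ≤ 1) →
      (∀ c : ℝ, 0 < c → ∀ᶠ n in atTop, u n ≤ w n + c) →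
      limsup u atTop ≤ limsup w atTop := by
    intro u w hu0 hw0 hw1 h
    refine le_of_forall_pos_le_add fun c hc => ?_
    have h1 : ∀ᶠ n in atTop, u n ≤ w n + c := h c hc
    calc limsup u atTop ≤ limsup (fun n => w n + c) atTop :=
          limsup_le_limsup h1
            (((isBoundedUnder_of ⟨0, fun n => hu0 n⟩ : IsBoundedUnder (· ≥ ·) atTop u)).isCoboundedUnder_le)
            (isBoundedUnder_of ⟨1 + c, fun n => by linarith [hw1 n]⟩)
      _ = limsup w atTop + c :=
          limsup_add_const atTop w c (isBoundedUnder_of ⟨1, hw1⟩)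
            (((isBoundedUnder_of ⟨0, fun n => hw0 n⟩ : IsBoundedUnder (· ≥ ·) atTop w)).isCoboundedUnder_le)
  refine le_antisymm (H u w hu0 hw0 hw1 fun c hc => ?_) (H w u hw0 hu0 hu1 fun c hc => ?_) <;>
    [skip; skip] <;>
    · filter_upwards [h c hc] with n hn
      have := abs_le.1 hn
      linarith [this.1, this.2]

section Invariance

variable (hf0 : ∀ y, 0 ≤ f y) (hf1 : ∀ y, f y ≤ 1)

include hf0 hf1 in
lemma rS_close (x : X) : ∀ c : ℝ, 0 < c →
    ∀ᶠ n in atTop, |rS T f (T x) n - rS T f x (n + 1)| ≤ c := by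
  intro c hc
  have key : ∀ n : ℕ, 1 ≤ n → |rS T f (T x) n - rS T f x (n + 1)| ≤ 2 / n := by
    intro n hn
    have hn0 : (0 : ℝ) < n := by exact_mod_cast hn
    have hn1 : (0 : ℝ) < (n : ℝ) + 1 := by linarith
    have hbS : bS T f n (T x) = bS T f (n + 1) x - f x := by
      have h := bS_add T f 1 n x
      rw [add_comm 1 n] at h
      rw [h, bS_one]
      simp
    set B := bS T f (n + 1) x with hB
    have hB0 : 0 ≤ B := bS_nonneg hf0 _ _
    have hB1 : B ≤ (n : ℝ) + 1 := by
      have := bS_le (T := T) hf1 (n + 1) x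
      push_cast at this
      linarith
    have hdiff : rS T f (T x) n - rS T f x (n + 1) = B / (n * (n + 1)) - f x / n := by
      rw [rS, rS, hbS, ← hB]
      push_cast
      field_simp
      ring
    rw [hdiff]
    have e1 : B / ((n : ℝ) * (n + 1)) ≤ 1 / n := by
      rw [div_le_div_iff₀ (by positivity) hn0]
      nlinarith
    have e2 : 0 ≤ B / ((n : ℝ) * (n + 1)) := by positivity
    have e3 : f x / (n : ℝ) ≤ 1 / n := (div_le_div_iff_of_pos_right hn0).2 (hf1 x)
    have e4 : 0 ≤ f x / (n : ℝ) := div_nonneg (hf0 x) hn0.le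
    have e5 : (1 : ℝ) / n ≤ 2 / n := (div_le_div_iff_of_pos_right hn0).2 one_le_two
    rw [abs_le]
    constructor <;> linarith
  have h2 : ∀ᶠ n : ℕ in atTop, 2 / (n : ℝ) ≤ c := by
    filter_upwards [eventually_ge_atTop (⌈2 / c⌉₊ + 1)] with n hn
    have h3 : (2 : ℝ) / c < n := by
      have h4 : (⌈2 / c⌉₊ : ℝ) < n := by exact_mod_cast hn
      linarith [Nat.le_ceil (2 / c)]
    have hn0 : (0 : ℝ) < n := lt_of_le_of_lt (by positivity) h3
    rw [div_le_iff₀ hn0]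
    rw [div_lt_iff₀ hc] at h3
    linarith
  filter_upwards [eventually_ge_atTop 1, h2] with n hn hc2
  exact (key n hn).trans hc2

include hf0 hf1 in
lemma lA_comp (x : X) : lA T f (T x) = lA T f x := by
  have h2 : liminf (rS T f (T x)) atTop = liminf (fun n => rS T f x (n + 1)) atTop :=
    liminf_eq_of_close (fun n => rS_nonneg hf0 _ n) (fun n => rS_le_one hf0 hf1 _ n)
      (fun n => rS_nonneg hf0 _ _) (fun n => rS_le_one hf0 hf1 _ _) (rS_close hf0 hf1 x)
  have h3 : liminf (fun n => rS T f x (n + 1)) atTop = liminf (rS T f x) atTop :=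
    liminf_nat_add (rS T f x) 1
  exact h2.trans h3

include hf0 hf1 in
lemma lB_comp (x : X) : lB T f (T x) = lB T f x := by
  have h2 : limsup (rS T f (T x)) atTop = limsup (fun n => rS T f x (n + 1)) atTop :=
    limsup_eq_of_close (fun n => rS_nonneg hf0 _ n) (fun n => rS_le_one hf0 hf1 _ n)
      (fun n => rS_nonneg hf0 _ _) (fun n => rS_le_one hf0 hf1 _ _) (rS_close hf0 hf1 x)
  have h3 : limsup (fun n => rS T f x (n + 1)) atTop = limsup (rS T f x) atTop :=
    limsup_nat_add (rS T f x) 1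
  exact h2.trans h3

include hf0 hf1 in
lemma lA_iterate (k : ℕ) (x : X) : lA T f (T^[k] x) = lA T f x := by
  induction k with
  | zero => rfl
  | succ k ih => rw [Function.iterate_succ_apply', lA_comp hf0 hf1, ih]

include hf0 hf1 in
lemma lB_iterate (k : ℕ) (x : X) : lB T f (T^[k] x) = lB T f x := by
  induction k with
  | zero => rfl
  | succ k ih => rw [Function.iterate_succ_apply', lB_comp hf0 hf1, ih]

end Invariance

section Meas

variable (hTm : Measurable T) (hfm : Measurable f)

include hTm hfm in
lemma bS_meas (n : ℕ) : Measurable (bS T f n) :=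
  Finset.measurable_sum _ fun i _ => hfm.comp (hTm.iterate i)

include hTm hfm in
lemma lA_meas : Measurable (lA T f) := by
  apply Measurable.liminf fun n => ?_
  exact (bS_meas hTm hfm n).div_const _

include hTm hfm in
lemma lB_meas : Measurable (lB T f) := by
  apply Measurable.limsup fun n => ?_
  exact (bS_meas hTm hfm n).div_const _

end Meas

section Integrals

variable {m : Measure X} [IsProbabilityMeasure m]

lemma integrable_of_bdd01 {g : X → ℝ} (hgm : Measurable g)
    (h0 : ∀ x, 0 ≤ g x) (h1 : ∀ x, g x ≤ 1) : Integrable g m :=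
  (integrable_const (1 : ℝ)).mono' hgm.aestronglyMeasurable
    (Eventually.of_forall fun x => by
      rw [Real.norm_eq_abs, abs_le]
      exact ⟨by linarith [h0 x], h1 x⟩)

lemma integral_comp_iterate (hT : MeasurePreserving T m m) {g : X → ℝ}
    (hgm : Measurable g) (k : ℕ) :
    ∫ x, g (T^[k] x) ∂m = ∫ x, g x ∂m := by
  have h := hT.iterate k
  calc ∫ x, g (T^[k] x) ∂m = ∫ y, g y ∂(Measure.map (T^[k]) m) :=
        (integral_map h.measurable.aemeasurable
          (by rw [h.map_eq]; exact hgm.aestronglyMeasurable)).symm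
    _ = ∫ x, g x ∂m := by rw [h.map_eq]

lemma integrable_comp_iterate (hT : MeasurePreserving T m m) {g : X → ℝ}
    (hgm : Measurable g) (hgi : Integrable g m) (k : ℕ) :
    Integrable (fun x => g (T^[k] x)) m := by
  have h := hT.iterate k
  have h2 : Integrable (g ∘ T^[k]) m :=
    (integrable_map_measure (by rw [h.map_eq]; exact hgm.aestronglyMeasurable)
      h.measurable.aemeasurable).1 (by rw [h.map_eq]; exact hgi)
  exact h2

lemma integrable_bS (hT : MeasurePreserving T m m) (hfm : Measurable f)
    (hfi : Integrable f m) (n : ℕ) : Integrable (bS T f n) m := by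
  unfold bS
  exact integrable_finset_sum _ fun i _ => integrable_comp_iterate hT hfm hfi i

lemma integral_bS (hT : MeasurePreserving T m m) (hfm : Measurable f)
    (hfi : Integrable f m) (n : ℕ) :
    ∫ x, bS T f n x ∂m = n * ∫ x, f x ∂m := by
  unfold bS
  rw [integral_finset_sum _ fun i _ => integrable_comp_iterate hT hfm hfi i]
  simp [integral_comp_iterate hT hfm, Finset.sum_const, nsmul_eq_mul]

end Integrals

section KW

variable {m : Measure X} [IsProbabilityMeasure m]

lemma kw_lower (hT : MeasurePreserving T m m) (hfm : Measurable f)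
    (hf0 : ∀ y, 0 ≤ f y) (hf1 : ∀ y, f y ≤ 1) :
    ∫ x, f x ∂m ≤ ∫ x, lA T f x ∂m := by
  classical
  have hTm : Measurable T := hT.measurable
  have hfi : Integrable f m := integrable_of_bdd01 hfm hf0 hf1
  have hAm : Measurable (lA T f) := lA_meas hTm hfm
  have hAi : Integrable (lA T f) m :=
    integrable_of_bdd01 hAm (fun x => lA_nonneg hf0 hf1 x) (fun x => lA_le_one hf0 hf1 x)
  refine le_of_forall_pos_le_add fun η hη => ?_
  set ε := η / 3 with hεdef
  have hε : 0 < ε := by positivity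
  have hex : ∀ x : X, ∃ n, 0 < n ∧ bS T f n x ≤ n * (lA T f x + ε) := by
    intro x
    have h1 : liminf (rS T f x) atTop < lA T f x + ε := lt_add_of_pos_right _ hε
    have h2 := frequently_lt_of_liminf_lt
      ((rS_bddAbove hf0 hf1 x).isCoboundedUnder_ge) h1
    obtain ⟨n, hn1, hlt⟩ := (frequently_atTop.1 h2) 1
    have hn0 : (0 : ℝ) < n := by exact_mod_cast hn1
    refine ⟨n, hn1, ?_⟩
    rw [rS] at hlt
    have := (div_lt_iff₀ hn0).1 hlt
    linarith
  set nx : X → ℕ := fun x => Nat.find (hex x) with hnxdef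
  have hnx_pos : ∀ x, 0 < nx x := fun x => (Nat.find_spec (hex x)).1
  have hnx_le : ∀ x, bS T f (nx x) x ≤ (nx x) * (lA T f x + ε) :=
    fun x => (Nat.find_spec (hex x)).2
  set B : ℕ → Set X := fun M => {x | M < nx x} with hBdef
  have hBmeas : ∀ M, MeasurableSet (B M) := by
    intro M
    have hrep : B M =
        ⋂ n ∈ Finset.range (M + 1), {x | ¬(0 < n ∧ bS T f n x ≤ n * (lA T f x + ε))} := by
      ext x
      simp only [hBdef, mem_setOf_eq, mem_iInter, Finset.mem_range, Nat.lt_succ_iff]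
      exact Nat.lt_find_iff (hex x) M
    rw [hrep]
    refine MeasurableSet.biInter (Finset.range (M + 1)).countable_toSet fun n _ => ?_
    by_cases hn : 0 < n
    · have : {x : X | ¬(0 < n ∧ bS T f n x ≤ n * (lA T f x + ε))}
          = {x : X | bS T f n x ≤ n * (lA T f x + ε)}ᶜ := by
        ext x; simp [hn]
      rw [this]
      exact (measurableSet_le (bS_meas hTm hfm n) ((hAm.add_const ε).const_mul _)).compl
    · have : {x : X | ¬(0 < n ∧ bS T f n x ≤ n * (lA T f x + ε))} = univ := by
        ext x; simp [hn]
      rw [this]; exact MeasurableSet.univ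
  have hBanti : Antitone B := fun M1 M2 h x hx => lt_of_le_of_lt h hx
  have hBempty : ⋂ M, B M = ∅ := by
    ext x
    simp only [mem_iInter, mem_empty_iff_false, iff_false, not_forall]
    exact ⟨nx x, by simp [hBdef]⟩
  have hBtend : Tendsto (fun M => (m (B M)).toReal) atTop (𝓝 0) := by
    have h1 : Tendsto (fun M => m (B M)) atTop (𝓝 (m (⋂ M, B M))) :=
      tendsto_measure_iInter_atTop (fun M => (hBmeas M).nullMeasurableSet) hBanti
        ⟨0, measure_ne_top m _⟩
    rw [hBempty, measure_empty] at h1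
    simpa [Function.comp_def] using (ENNReal.tendsto_toReal (by simp)).comp h1
  obtain ⟨M, hM⟩ := (hBtend.eventually (eventually_lt_nhds hε)).exists
  set g : X → ℝ := (B M).indicator (fun _ => (1 : ℝ)) with hgdef
  have hg0 : ∀ y, 0 ≤ g y := fun y => Set.indicator_nonneg (fun _ _ => zero_le_one) y
  have hg1 : ∀ y, g y ≤ 1 := fun y => by
    rw [hgdef]; by_cases hy : y ∈ B M <;> simp [Set.indicator_apply, hy]
  have hgm : Measurable g := measurable_const.indicator (hBmeas M)
  have hgi : Integrable g m := integrable_of_bdd01 hgm hg0 hg1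
  have key : ∀ N : ℕ, ∀ x : X,
      bS T f N x ≤ N * (lA T f x + ε) + (∑ i ∈ Finset.range N, g (T^[i] x)) + M := by
    intro N
    induction N using Nat.strong_induction_on with
    | _ N ih =>
      intro x
      have hsum_nonneg : ∀ (p : ℕ) (y : X), 0 ≤ ∑ i ∈ Finset.range p, g (T^[i] y) :=
        fun p y => Finset.sum_nonneg fun i _ => hg0 _
      have haε : 0 ≤ lA T f x + ε := by linarith [lA_nonneg (T := T) hf0 hf1 x]
      rcases Nat.eq_zero_or_pos N with rfl | hN
      · simp only [bS, Finset.range_zero, Finset.sum_empty, Nat.cast_zero, zero_mul, zero_add]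
        positivity
      by_cases hM2 : nx x ≤ M
      · by_cases hN2 : nx x ≤ N
        · -- good block
          have hk1 : 0 < nx x := hnx_pos x
          have hsplit : bS T f N x = bS T f (nx x) x + bS T f (N - nx x) (T^[nx x] x) := by
            have h := bS_add T f (nx x) (N - nx x) x
            rwa [Nat.add_sub_cancel' hN2] at h
          have hih := ih (N - nx x) (by omega) (T^[nx x] x)
          rw [lA_iterate hf0 hf1] at hih
          have hsum : (∑ i ∈ Finset.range (N - nx x), g (T^[i] (T^[nx x] x)))
              ≤ ∑ i ∈ Finset.range N, g (T^[i] x) := by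
            have e : ∀ i, g (T^[nx x + i] x) = g (T^[i] (T^[nx x] x)) := by
              intro i; rw [add_comm, Function.iterate_add_apply]
            calc (∑ i ∈ Finset.range (N - nx x), g (T^[i] (T^[nx x] x)))
                = ∑ i ∈ Finset.Ico (nx x) N, g (T^[i] x) := by
                  rw [Finset.sum_Ico_eq_sum_range]
                  exact (Finset.sum_congr rfl fun i _ => e i).symm
              _ ≤ ∑ i ∈ Finset.range N, g (T^[i] x) := by
                  apply Finset.sum_le_sum_of_subset_of_nonneg
                  · rw [Finset.range_eq_Ico]
                    exact Finset.Ico_subset_Ico (Nat.zero_le _) le_rfl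
                  · intro i _ _; exact hg0 _
          have hcast : ((N - nx x : ℕ) : ℝ) = (N : ℝ) - nx x := by
            exact Nat.cast_sub hN2
          have hfind := hnx_le x
          rw [hsplit]
          rw [hcast] at hih
          linarith [hih, hsum, hfind]
        · -- nx x ≤ M but nx x > N
          have h1 : bS T f N x ≤ N := bS_le (T := T) hf1 N x
          have h2 : (N : ℝ) ≤ M := by
            have h3 : N < nx x := not_le.1 hN2
            have h4 : N ≤ M := le_trans h3.le hM2
            exact_mod_cast h4
          have h3 : 0 ≤ (N : ℝ) * (lA T f x + ε) := mul_nonneg (Nat.cast_nonneg N) haε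
          linarith [hsum_nonneg N x]
      · -- bad step
        obtain ⟨N', rfl⟩ : ∃ N', N = N' + 1 := ⟨N - 1, by omega⟩
        have hgx : g x = 1 := by
          have hx : x ∈ B M := not_le.1 hM2
          rw [hgdef]; simp [Set.indicator_of_mem hx]
        have hsplit : bS T f (N' + 1) x = f x + bS T f N' (T x) := by
          have h := bS_add T f 1 N' x
          rw [add_comm 1 N'] at h
          rw [h, bS_one]
          simp
        have hih := ih N' (by omega) (T x)
        rw [lA_comp hf0 hf1] at hih
        have hsum : (∑ i ∈ Finset.range (N' + 1), g (T^[i] x))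
            = g x + ∑ i ∈ Finset.range N', g (T^[i] (T x)) := by
          rw [Finset.sum_range_succ']
          simp only [Function.iterate_succ_apply, Function.iterate_zero_apply]
          ring
        have hc : ((N' : ℝ) + 1) * (lA T f x + ε) = (N' : ℝ) * (lA T f x + ε) + (lA T f x + ε) := by
          ring
        push_cast
        rw [hsplit, hsum, hgx]
        push_cast at hih
        linarith [hf1 x, hih]
  -- integration
  have hSg : ∀ N : ℕ, Integrable (fun x => ∑ i ∈ Finset.range N, g (T^[i] x)) m :=
    fun N => integrable_finset_sum _ fun i _ => integrable_comp_iterate hT hgm hgi i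
  have hIg : ∀ N : ℕ, ∫ x, (∑ i ∈ Finset.range N, g (T^[i] x)) ∂m = N * (m (B M)).toReal := by
    intro N
    rw [integral_finset_sum _ fun i _ => integrable_comp_iterate hT hgm hgi i]
    have hg_int : ∫ x, g x ∂m = (m (B M)).toReal := by
      rw [hgdef, integral_indicator_const (1 : ℝ) (hBmeas M), smul_eq_mul, mul_one]
      rfl
    simp [integral_comp_iterate hT hgm, hg_int, Finset.sum_const, nsmul_eq_mul]
  set N : ℕ := ⌈(M : ℝ) / ε⌉₊ + 1 with hNdef
  have hN0 : 0 < N := Nat.succ_pos _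
  have hN0' : (0 : ℝ) < N := by exact_mod_cast hN0
  have hMN : (M : ℝ) ≤ N * ε := by
    have h1 : (M : ℝ) / ε ≤ ⌈(M : ℝ) / ε⌉₊ := Nat.le_ceil _
    have h2 : ((⌈(M : ℝ) / ε⌉₊ : ℝ)) ≤ N := by exact_mod_cast Nat.le_succ _
    calc (M : ℝ) = ((M : ℝ) / ε) * ε := by field_simp
      _ ≤ (N : ℝ) * ε := by nlinarith
  have hint1 : Integrable (fun x => (N : ℝ) * (lA T f x + ε)) m :=
    (hAi.add (integrable_const ε)).const_mul _
  have hmono := integral_mono (integrable_bS hT hfm hfi N)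
    ((hint1.add (hSg N)).add (integrable_const (M : ℝ))) (fun x => key N x)
  rw [integral_bS hT hfm hfi N] at hmono
  have hadd' : Integrable
      (fun x => (N : ℝ) * (lA T f x + ε) + ∑ i ∈ Finset.range N, g (T^[i] x)) m :=
    hint1.add (hSg N)
  have hRHS : ∫ x, ((N : ℝ) * (lA T f x + ε) + (∑ i ∈ Finset.range N, g (T^[i] x)) + M) ∂m
      = N * ((∫ x, lA T f x ∂m) + ε) + N * (m (B M)).toReal + M := by
    rw [integral_add hadd' (integrable_const _), integral_add hint1 (hSg N),
      integral_const_mul _ _, integral_add hAi (integrable_const ε), integral_const, integral_const,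
      hIg N]
    simp [measure_univ]
  replace hmono := le_trans hmono (le_of_eq hRHS)
  have hB3 : (N : ℝ) * (m (B M)).toReal ≤ N * ε :=
    mul_le_mul_of_nonneg_left hM.le hN0'.le
  have h5 : (N : ℝ) * ∫ x, f x ∂m ≤ (N : ℝ) * ((∫ x, lA T f x ∂m) + 3 * ε) := by
    nlinarith [hmono, hMN, hB3]
  have hfinal : ∫ x, f x ∂m ≤ (∫ x, lA T f x ∂m) + 3 * ε :=
    le_of_mul_le_mul_left h5 hN0'
  rw [hεdef] at hfinal
  linarith

lemma kw_upper (hT : MeasurePreserving T m m) (hfm : Measurable f)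
    (hf0 : ∀ y, 0 ≤ f y) (hf1 : ∀ y, f y ≤ 1) :
    ∫ x, lB T f x ∂m ≤ ∫ x, f x ∂m := by
  classical
  have hTm : Measurable T := hT.measurable
  have hfi : Integrable f m := integrable_of_bdd01 hfm hf0 hf1
  have hBm : Measurable (lB T f) := lB_meas hTm hfm
  have hBi : Integrable (lB T f) m :=
    integrable_of_bdd01 hBm (fun x => lB_nonneg hf0 hf1 x) (fun x => lB_le_one hf0 hf1 x)
  refine le_of_forall_pos_le_add fun η hη => ?_
  set ε := η / 4 with hεdef
  have hε : 0 < ε := by positivity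
  set c : X → ℝ := fun x => max (lB T f x - ε) 0 with hcdef
  have hc0 : ∀ y, 0 ≤ c y := fun y => le_max_right _ _
  have hc1 : ∀ y, c y ≤ 1 := fun y =>
    max_le (by linarith [lB_le_one (T := T) hf0 hf1 y]) zero_le_one
  have hcm : Measurable c := (hBm.sub measurable_const).max measurable_const
  have hci : Integrable c m := integrable_of_bdd01 hcm hc0 hc1
  have hciter : ∀ (k : ℕ) (y : X), c (T^[k] y) = c y := by
    intro k y
    simp only [hcdef]
    rw [lB_iterate hf0 hf1]
  have hex : ∀ x : X, ∃ n : ℕ, 0 < n ∧ (n : ℝ) * c x ≤ bS T f n x := by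
    intro x
    rcases le_or_gt (lB T f x - ε) 0 with h | h
    · refine ⟨1, one_pos, ?_⟩
      have : c x = 0 := max_eq_right h
      rw [this]
      simpa [bS_one] using hf0 x
    · have h1 : lB T f x - ε < limsup (rS T f x) atTop := by
        have : lB T f x - ε < lB T f x := by linarith
        exact this
      have h2 := frequently_lt_of_lt_limsup ((rS_bddBelow hf0 x).isCoboundedUnder_le) h1
      obtain ⟨n, hn1, hlt⟩ := (frequently_atTop.1 h2) 1
      have hn0 : (0 : ℝ) < n := by exact_mod_cast hn1
      refine ⟨n, hn1, ?_⟩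
      have hcx : c x = lB T f x - ε := max_eq_left h.le
      rw [rS] at hlt
      have := (lt_div_iff₀ hn0).1 hlt
      rw [hcx]
      linarith
  set nx : X → ℕ := fun x => Nat.find (hex x) with hnxdef
  have hnx_pos : ∀ x, 0 < nx x := fun x => (Nat.find_spec (hex x)).1
  have hnx_le : ∀ x, (nx x : ℝ) * c x ≤ bS T f (nx x) x :=
    fun x => (Nat.find_spec (hex x)).2
  set B : ℕ → Set X := fun M => {x | M < nx x} with hBdef
  have hBmeas : ∀ M, MeasurableSet (B M) := by
    intro M
    have hrep : B M =
        ⋂ n ∈ Finset.range (M + 1), {x | ¬(0 < n ∧ (n : ℝ) * c x ≤ bS T f n x)} := by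
      ext x
      simp only [hBdef, mem_setOf_eq, mem_iInter, Finset.mem_range, Nat.lt_succ_iff]
      exact Nat.lt_find_iff (hex x) M
    rw [hrep]
    refine MeasurableSet.biInter (Finset.range (M + 1)).countable_toSet fun n _ => ?_
    by_cases hn : 0 < n
    · have : {x : X | ¬(0 < n ∧ (n : ℝ) * c x ≤ bS T f n x)}
          = {x : X | (n : ℝ) * c x ≤ bS T f n x}ᶜ := by
        ext x; simp [hn]
      rw [this]
      exact (measurableSet_le (hcm.const_mul _) (bS_meas hTm hfm n)).compl
    · have : {x : X | ¬(0 < n ∧ (n : ℝ) * c x ≤ bS T f n x)} = univ := by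
        ext x; simp [hn]
      rw [this]; exact MeasurableSet.univ
  have hBanti : Antitone B := fun M1 M2 h x hx => lt_of_le_of_lt h hx
  have hBempty : ⋂ M, B M = ∅ := by
    ext x
    simp only [mem_iInter, mem_empty_iff_false, iff_false, not_forall]
    exact ⟨nx x, by simp [hBdef]⟩
  have hBtend : Tendsto (fun M => (m (B M)).toReal) atTop (𝓝 0) := by
    have h1 : Tendsto (fun M => m (B M)) atTop (𝓝 (m (⋂ M, B M))) :=
      tendsto_measure_iInter_atTop (fun M => (hBmeas M).nullMeasurableSet) hBanti
        ⟨0, measure_ne_top m _⟩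
    rw [hBempty, measure_empty] at h1
    simpa [Function.comp_def] using (ENNReal.tendsto_toReal (by simp)).comp h1
  obtain ⟨M, hM⟩ := (hBtend.eventually (eventually_lt_nhds hε)).exists
  set g : X → ℝ := (B M).indicator (fun _ => (1 : ℝ)) with hgdef
  have hg0 : ∀ y, 0 ≤ g y := fun y => Set.indicator_nonneg (fun _ _ => zero_le_one) y
  have hg1 : ∀ y, g y ≤ 1 := fun y => by
    rw [hgdef]; by_cases hy : y ∈ B M <;> simp [Set.indicator_apply, hy]
  have hgm : Measurable g := measurable_const.indicator (hBmeas M)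
  have hgi : Integrable g m := integrable_of_bdd01 hgm hg0 hg1
  have key : ∀ N : ℕ, ∀ x : X,
      (N : ℝ) * c x - (∑ i ∈ Finset.range N, g (T^[i] x)) - M ≤ bS T f N x := by
    intro N
    induction N using Nat.strong_induction_on with
    | _ N ih =>
      intro x
      have hsum_nonneg : ∀ (p : ℕ) (y : X), 0 ≤ ∑ i ∈ Finset.range p, g (T^[i] y) :=
        fun p y => Finset.sum_nonneg fun i _ => hg0 _
      rcases Nat.eq_zero_or_pos N with rfl | hN
      · simp only [bS, Finset.range_zero, Finset.sum_empty, Nat.cast_zero, zero_mul, zero_sub]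
        have : (0 : ℝ) ≤ M := Nat.cast_nonneg M
        linarith
      by_cases hM2 : nx x ≤ M
      · by_cases hN2 : nx x ≤ N
        · have hk1 : 0 < nx x := hnx_pos x
          have hsplit : bS T f N x = bS T f (nx x) x + bS T f (N - nx x) (T^[nx x] x) := by
            have h := bS_add T f (nx x) (N - nx x) x
            rwa [Nat.add_sub_cancel' hN2] at h
          have hih := ih (N - nx x) (by omega) (T^[nx x] x)
          rw [hciter (nx x) x] at hih
          have hsum : (∑ i ∈ Finset.range (N - nx x), g (T^[i] (T^[nx x] x)))
              ≤ ∑ i ∈ Finset.range N, g (T^[i] x) := by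
            have e : ∀ i, g (T^[nx x + i] x) = g (T^[i] (T^[nx x] x)) := by
              intro i; rw [add_comm, Function.iterate_add_apply]
            calc (∑ i ∈ Finset.range (N - nx x), g (T^[i] (T^[nx x] x)))
                = ∑ i ∈ Finset.Ico (nx x) N, g (T^[i] x) := by
                  rw [Finset.sum_Ico_eq_sum_range]
                  exact (Finset.sum_congr rfl fun i _ => e i).symm
              _ ≤ ∑ i ∈ Finset.range N, g (T^[i] x) := by
                  apply Finset.sum_le_sum_of_subset_of_nonneg
                  · rw [Finset.range_eq_Ico]
                    exact Finset.Ico_subset_Ico (Nat.zero_le _) le_rfl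
                  · intro i _ _; exact hg0 _
          have hcast : ((N - nx x : ℕ) : ℝ) = (N : ℝ) - nx x := by
            exact Nat.cast_sub hN2
          have hfind := hnx_le x
          rw [hsplit]
          rw [hcast] at hih
          linarith [hih, hsum, hfind]
        · have h1 : 0 ≤ bS T f N x := bS_nonneg hf0 N x
          have h2 : (N : ℝ) ≤ M := by
            have h3 : N < nx x := not_le.1 hN2
            have h4 : N ≤ M := le_trans h3.le hM2
            exact_mod_cast h4
          have h3 : (N : ℝ) * c x ≤ N := by
            have := hc1 x
            nlinarith [Nat.cast_nonneg (α := ℝ) N]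
          linarith [hsum_nonneg N x]
      · obtain ⟨N', rfl⟩ : ∃ N', N = N' + 1 := ⟨N - 1, by omega⟩
        have hgx : g x = 1 := by
          have hx : x ∈ B M := not_le.1 hM2
          rw [hgdef]; simp [Set.indicator_of_mem hx]
        have hsplit : bS T f (N' + 1) x = f x + bS T f N' (T x) := by
          have h := bS_add T f 1 N' x
          rw [add_comm 1 N'] at h
          rw [h, bS_one]
          simp
        have hih := ih N' (by omega) (T x)
        have hcx : c (T x) = c x := by
          have h := hciter 1 x
          simpa using h
        rw [hcx] at hih
        have hsum : (∑ i ∈ Finset.range (N' + 1), g (T^[i] x))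
            = g x + ∑ i ∈ Finset.range N', g (T^[i] (T x)) := by
          rw [Finset.sum_range_succ']
          simp only [Function.iterate_succ_apply, Function.iterate_zero_apply]
          ring
        push_cast
        rw [hsplit, hsum, hgx]
        push_cast at hih
        linarith [hf0 x, hc1 x, hih]
  -- integration
  have hSg : ∀ N : ℕ, Integrable (fun x => ∑ i ∈ Finset.range N, g (T^[i] x)) m :=
    fun N => integrable_finset_sum _ fun i _ => integrable_comp_iterate hT hgm hgi i
  have hIg : ∀ N : ℕ, ∫ x, (∑ i ∈ Finset.range N, g (T^[i] x)) ∂m = N * (m (B M)).toReal := by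
    intro N
    rw [integral_finset_sum _ fun i _ => integrable_comp_iterate hT hgm hgi i]
    have hg_int : ∫ x, g x ∂m = (m (B M)).toReal := by
      rw [hgdef, integral_indicator_const (1 : ℝ) (hBmeas M), smul_eq_mul, mul_one]
      rfl
    simp [integral_comp_iterate hT hgm, hg_int, Finset.sum_const, nsmul_eq_mul]
  set N : ℕ := ⌈(M : ℝ) / ε⌉₊ + 1 with hNdef
  have hN0 : 0 < N := Nat.succ_pos _
  have hN0' : (0 : ℝ) < N := by exact_mod_cast hN0
  have hMN : (M : ℝ) ≤ N * ε := by
    have h1 : (M : ℝ) / ε ≤ ⌈(M : ℝ) / ε⌉₊ := Nat.le_ceil _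
    have h2 : ((⌈(M : ℝ) / ε⌉₊ : ℝ)) ≤ N := by exact_mod_cast Nat.le_succ _
    calc (M : ℝ) = ((M : ℝ) / ε) * ε := by field_simp
      _ ≤ (N : ℝ) * ε := by nlinarith
  have hint1 : Integrable (fun x => (N : ℝ) * c x) m := hci.const_mul _
  have hmono := integral_mono
    ((hint1.sub (hSg N)).sub (integrable_const (M : ℝ)))
    (integrable_bS hT hfm hfi N) (fun x => key N x)
  rw [integral_bS hT hfm hfi N] at hmono
  have hsub' : Integrable
      (fun x => (N : ℝ) * c x - ∑ i ∈ Finset.range N, g (T^[i] x)) m :=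
    hint1.sub (hSg N)
  have hLHS : ∫ x, ((N : ℝ) * c x - (∑ i ∈ Finset.range N, g (T^[i] x)) - M) ∂m
      = N * (∫ x, c x ∂m) - N * (m (B M)).toReal - M := by
    rw [integral_sub hsub' (integrable_const _), integral_sub hint1 (hSg N),
      integral_const_mul _ _, integral_const, hIg N]
    simp [measure_univ]
  replace hmono := le_trans (le_of_eq hLHS.symm) hmono
  have hB3 : (N : ℝ) * (m (B M)).toReal ≤ N * ε :=
    mul_le_mul_of_nonneg_left hM.le hN0'.le
  have h5 : (N : ℝ) * (∫ x, c x ∂m) ≤ (N : ℝ) * ((∫ x, f x ∂m) + 2 * ε) := by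
    nlinarith [hmono, hMN, hB3]
  have h6 : ∫ x, c x ∂m ≤ (∫ x, f x ∂m) + 2 * ε :=
    le_of_mul_le_mul_left h5 hN0'
  have h7 : ∫ x, lB T f x ∂m ≤ (∫ x, c x ∂m) + ε := by
    have hpt : ∀ x, lB T f x ≤ c x + ε := fun x => by
      have : lB T f x - ε ≤ c x := le_max_left _ _
      linarith
    have hadd : Integrable (fun x => c x + ε) m := hci.add (integrable_const ε)
    have e : ∫ x, (c x + ε) ∂m = (∫ x, c x ∂m) + ε := by
      rw [integral_add hci (integrable_const ε), integral_const, probReal_univ,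
        one_smul]
    exact (integral_mono hBi hadd (fun x => hpt x)).trans (le_of_eq e)
  rw [hεdef] at h6 h7
  linarith

end KW

lemma birkhoff01 {m : Measure X} [IsProbabilityMeasure m] (hT : Ergodic T m)
    (hfm : Measurable f) (hf0 : ∀ y, 0 ≤ f y) (hf1 : ∀ y, f y ≤ 1) :
    ∀ᵐ x ∂m, Tendsto (fun n : ℕ => bS T f n x / n) atTop (𝓝 (∫ x, f x ∂m)) := by
  have hTm : Measurable T := hT.toMeasurePreserving.measurable
  have hMP : MeasurePreserving T m m := hT.toMeasurePreserving
  have hfi : Integrable f m := integrable_of_bdd01 hfm hf0 hf1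
  have hAm : Measurable (lA T f) := lA_meas hTm hfm
  have hBm : Measurable (lB T f) := lB_meas hTm hfm
  have hAi : Integrable (lA T f) m :=
    integrable_of_bdd01 hAm (fun x => lA_nonneg (T := T) hf0 hf1 x)
      (fun x => lA_le_one (T := T) hf0 hf1 x)
  have hBi : Integrable (lB T f) m :=
    integrable_of_bdd01 hBm (fun x => lB_nonneg (T := T) hf0 hf1 x)
      (fun x => lB_le_one (T := T) hf0 hf1 x)
  have h1 := kw_lower hMP hfm hf0 hf1
  have h2 := kw_upper hMP hfm hf0 hf1
  have h3 : ∫ x, lA T f x ∂m ≤ ∫ x, lB T f x ∂m :=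
    integral_mono hAi hBi fun x => lA_le_lB hf0 hf1 x
  have hAeq : ∫ x, lA T f x ∂m = ∫ x, f x ∂m := le_antisymm (by linarith) (by linarith)
  have hABae : lB T f =ᵐ[m] lA T f := by
    have h5 : ∫ x, (lB T f x - lA T f x) ∂m = 0 := by
      rw [integral_sub hBi hAi]; linarith
    have h6 := (integral_eq_zero_iff_of_nonneg
      (fun x => sub_nonneg.2 (lA_le_lB (T := T) hf0 hf1 x)) (hBi.sub hAi)).1 h5
    filter_upwards [h6] with x hx
    have hx' : lB T f x - lA T f x = 0 := by simpa using hx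
    linarith
  obtain ⟨cst, hcst⟩ := hT.ae_eq_const_of_ae_eq_comp₀ hAm.nullMeasurable
    (Eventually.of_forall fun x => lA_comp hf0 hf1 x)
  have hcint : ∫ x, lA T f x ∂m = cst := by
    rw [integral_congr_ae hcst]
    simp [Function.const]
  have hcf : cst = ∫ x, f x ∂m := by rw [← hcint, hAeq]
  filter_upwards [hcst, hABae] with x h1x h2x
  have hlainf : lA T f x = ∫ x, f x ∂m := by
    have : lA T f x = cst := h1x
    rw [this, hcf]
  refine tendsto_of_liminf_eq_limsup ?_ ?_ (rS_bddAbove hf0 hf1 x) (rS_bddBelow hf0 x)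
  · exact hlainf
  · have : lB T f x = lA T f x := h2x
    rw [← hlainf, ← this]
    rfl

end Stmt18Aux

open Stmt18Aux

/-- For an ergodic p.m.p. transformation `T`, a set `E` of positive measure, `0 < δ < 1`
and `ε > 0`, there is `N` such that the set of points hitting `E` in every window
`(n(1−δ), n]` with `n ≥ N` has measure greater than `m(E) − ε`. -/
theorem stmt18 {X : Type*} [MeasurableSpace X] (m : Measure X) [IsProbabilityMeasure m]
    (T : X → X) (hT : Ergodic T m)
    (E : Set X) (hE : MeasurableSet E) (hEpos : 0 < m E)
    (δ : ℝ) (hδ0 : 0 < δ) (hδ1 : δ < 1)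
    (ε : ℝ) (hε : 0 < ε) :
    ∃ N : ℕ,
      ((m E).toReal - ε) <
        (m {x : X | ∀ n : ℕ, N ≤ n →
          ∃ n' : ℕ, (n' : ℝ) < δ * n ∧ T^[n - n'] x ∈ E}).toReal := by
  classical
  have hTm : Measurable T := hT.toMeasurePreserving.measurable
  set f : X → ℝ := E.indicator (fun _ => (1 : ℝ)) with hfdef
  have hfm : Measurable f := measurable_const.indicator hE
  have hf0 : ∀ y, 0 ≤ f y := fun y => Set.indicator_nonneg (fun _ _ => zero_le_one) y
  have hf1 : ∀ y, f y ≤ 1 := fun y => by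
    rw [hfdef]; by_cases hy : y ∈ E <;> simp [Set.indicator_apply, hy]
  have hintf : ∫ x, f x ∂m = (m E).toReal := by
    rw [hfdef, integral_indicator_const (1 : ℝ) hE, smul_eq_mul, mul_one]
    rfl
  set d : ℝ := (m E).toReal with hddef
  have hd0 : 0 < d := ENNReal.toReal_pos hEpos.ne' (measure_ne_top m E)
  have hd1 : d ≤ 1 := by
    rw [hddef]
    calc (m E).toReal ≤ (1 : ℝ≥0∞).toReal :=
          ENNReal.toReal_mono ENNReal.one_ne_top prob_le_one
      _ = 1 := by simp
  have hbk := birkhoff01 hT hfm hf0 hf1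
  rw [hintf] at hbk
  set A : ℕ → Set X := fun N => {x : X | ∀ n : ℕ, N ≤ n →
      ∃ n' : ℕ, (n' : ℝ) < δ * n ∧ T^[n - n'] x ∈ E} with hAdef
  have hAmeas : ∀ N, MeasurableSet (A N) := by
    intro N
    have hrep : A N = ⋂ n : ℕ, ⋂ (_ : N ≤ n), ⋃ n' : ℕ, ⋃ (_ : (n' : ℝ) < δ * n),
        T^[n - n'] ⁻¹' E := by
      ext x
      simp [hAdef]
    rw [hrep]
    exact MeasurableSet.iInter fun n => MeasurableSet.iInter fun _ =>
      MeasurableSet.iUnion fun n' => MeasurableSet.iUnion fun _ => (hTm.iterate _) hE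
  have hAmono : Monotone A := fun N1 N2 h x hx n hn => hx n (le_trans h hn)
  have h1δ : (0 : ℝ) < 1 - δ := by linarith
  have hae : ∀ᵐ x ∂m, x ∈ ⋃ N, A N := by
    filter_upwards [hbk] with x hx
    rw [mem_iUnion]
    have hη : (0 : ℝ) < d * δ / 8 := by positivity
    obtain ⟨N₀, hN₀⟩ := (Metric.tendsto_atTop.1 hx) (d * δ / 8) hη
    refine ⟨max (⌈(N₀ : ℝ) / (1 - δ)⌉₊ + 1) (max (⌈4 / δ⌉₊ + 1) (⌈1 / δ⌉₊ + 1)), ?_⟩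
    intro n hn
    -- numeric consequences of n being large
    have hnc1 : ⌈(N₀ : ℝ) / (1 - δ)⌉₊ + 1 ≤ n := le_trans (le_max_left _ _) hn
    have hnc2 : ⌈4 / δ⌉₊ + 1 ≤ n := le_trans (le_trans (le_max_left _ _) (le_max_right _ _)) hn
    have hnc3 : ⌈1 / δ⌉₊ + 1 ≤ n := le_trans (le_trans (le_max_right _ _) (le_max_right _ _)) hn
    have hr1 : (N₀ : ℝ) / (1 - δ) < n := by
      have h : (⌈(N₀ : ℝ) / (1 - δ)⌉₊ : ℝ) < n := by exact_mod_cast hnc1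
      linarith [Nat.le_ceil ((N₀ : ℝ) / (1 - δ))]
    have hrN₀ : (N₀ : ℝ) < (1 - δ) * n := by
      rw [div_lt_iff₀ h1δ] at hr1
      linarith
    have hr2 : (4 : ℝ) / δ < n := by
      have h : (⌈(4 : ℝ) / δ⌉₊ : ℝ) < n := by exact_mod_cast hnc2
      linarith [Nat.le_ceil ((4 : ℝ) / δ)]
    have hn4 : (4 : ℝ) < δ * n := by
      rw [div_lt_iff₀ hδ0] at hr2
      linarith
    have hr3 : (1 : ℝ) / δ < n := by
      have h : (⌈(1 : ℝ) / δ⌉₊ : ℝ) < n := by exact_mod_cast hnc3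
      linarith [Nat.le_ceil ((1 : ℝ) / δ)]
    have hδn1 : (1 : ℝ) ≤ δ * n := by
      rw [div_lt_iff₀ hδ0] at hr3
      linarith
    have hn0R : (0 : ℝ) < n := by
      have e := mul_nonneg (Nat.cast_nonneg (α := ℝ) n) (sub_nonneg.2 hδ1.le)
      nlinarith [hδn1]
    -- the window
    set k : ℕ := ⌊δ * (n : ℝ)⌋₊ with hkdef
    have hk1 : 1 ≤ k := Nat.le_floor (by exact_mod_cast hδn1)
    have hkle : (k : ℝ) ≤ δ * n := Nat.floor_le (by positivity)
    have hkgt : δ * (n : ℝ) - 1 < k := by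
      have := Nat.lt_floor_add_one (δ * (n : ℝ))
      linarith
    have hknR : (k : ℝ) < n := by nlinarith
    have hkn : k < n := by exact_mod_cast hknR
    set s : ℕ := n + 1 - k with hsdef
    have hsk : s + k = n + 1 := by omega
    have hsn : (s : ℝ) = (n : ℝ) + 1 - k := by
      rw [hsdef, Nat.cast_sub (by omega)]
      push_cast
      ring
    have hsN₀R : (N₀ : ℝ) < s := by
      rw [hsn]
      nlinarith [hrN₀, hkle]
    have hsN₀ : N₀ ≤ s := (by exact_mod_cast hsN₀R : N₀ < s).le
    have hn1N₀ : N₀ ≤ n + 1 := by omega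
    have hs0 : (0 : ℝ) < s := by rw [hsn]; nlinarith [hkle]
    have hb1 := hN₀ (n + 1) hn1N₀
    have hb2 := hN₀ s hsN₀
    rw [Real.dist_eq, abs_lt] at hb1 hb2
    have hcast : ((n + 1 : ℕ) : ℝ) = (n : ℝ) + 1 := by push_cast; ring
    have e1 : (d - d * δ / 8) * ((n : ℝ) + 1) < bS T f (n + 1) x := by
      have hq : d - d * δ / 8 < bS T f (n + 1) x / ((n + 1 : ℕ) : ℝ) := by
        linarith [hb1.1]
      have h2 := (lt_div_iff₀ (by rw [hcast]; positivity : (0:ℝ) < ((n + 1 : ℕ) : ℝ))).1 hq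
      rw [hcast] at h2
      linarith [h2]
    have e2 : bS T f s x < (d + d * δ / 8) * s := by
      have hq2 : bS T f s x / ((s : ℕ) : ℝ) < d + d * δ / 8 := by
        linarith [hb2.2]
      have h2 := (div_lt_iff₀ hs0).1 hq2
      linarith [h2]
    have hmain : (d + d * δ / 8) * (s : ℝ) < (d - d * δ / 8) * ((n : ℝ) + 1) := by
      rw [hsn]
      have hprod : (d + d * δ / 8) * (δ * (n : ℝ) - 1) < (d + d * δ / 8) * k :=
        mul_lt_mul_of_pos_left hkgt (by positivity)
      nlinarith [hn4, hδ1.le, hδ0.le, hd0.le,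
        mul_lt_mul_of_pos_left hn4 hd0,
        mul_nonneg (mul_nonneg hd0.le hδ0.le) (mul_nonneg hδ0.le (Nat.cast_nonneg (α := ℝ) n)),
        mul_le_of_le_one_right hd0.le hδ1.le]
    have hlt2 : bS T f s x < bS T f (n + 1) x := by
      calc bS T f s x < (d + d * δ / 8) * s := e2
        _ < (d - d * δ / 8) * ((n : ℝ) + 1) := hmain
        _ < bS T f (n + 1) x := e1
    have hsplit : bS T f (n + 1) x = bS T f s x + bS T f k (T^[s] x) := by
      have h := bS_add T f s k x
      rwa [hsk] at h
    have hsum_pos : 0 < bS T f k (T^[s] x) := by linarith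
    obtain ⟨i, hi, hipos⟩ : ∃ i ∈ Finset.range k, 0 < f (T^[i] (T^[s] x)) := by
      by_contra hcon
      push_neg at hcon
      have hle : bS T f k (T^[s] x) ≤ 0 := by
        unfold bS
        exact Finset.sum_nonpos fun i hi => hcon i hi
      linarith
    rw [← Function.iterate_add_apply] at hipos
    have hmem : T^[i + s] x ∈ E := by
      by_contra hnot
      rw [hfdef] at hipos
      rw [Set.indicator_of_notMem hnot] at hipos
      exact lt_irrefl _ hipos
    have hik : i < k := Finset.mem_range.1 hi
    have hjn : i + s ≤ n := by omega
    refine ⟨n - (i + s), ?_, ?_⟩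
    · have hcast2 : ((n - (i + s) : ℕ) : ℝ) = (n : ℝ) - ((i : ℝ) + s) := by
        rw [Nat.cast_sub hjn]
        push_cast
        ring
      rw [hcast2]
      have hni : (n : ℝ) - ((i : ℝ) + s) ≤ (k : ℝ) - 1 := by
        rw [hsn]
        have : (0 : ℝ) ≤ (i : ℝ) := Nat.cast_nonneg i
        linarith
      linarith [hkle]
    · rw [Nat.sub_sub_self hjn]
      exact hmem
  have h0 : m {x | x ∉ ⋃ N, A N} = 0 := by
    have := ae_iff.1 hae
    simpa using this
  have hU : m (⋃ N, A N) = 1 := by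
    have hcompl : (⋃ N, A N) =ᵐ[m] (univ : Set X) := by
      rw [ae_eq_univ]
      exact h0
    rw [measure_congr hcompl, measure_univ]
  have htend : Tendsto (fun N => m (A N)) atTop (𝓝 1) := by
    have h := tendsto_measure_iUnion_atTop (μ := m) hAmono
    rwa [hU] at h
  have htend2 : Tendsto (fun N => (m (A N)).toReal) atTop (𝓝 1) := by
    have h := (ENNReal.tendsto_toReal ENNReal.one_ne_top).comp htend
    simpa [Function.comp_def] using h
  have hlt : d - ε < 1 := by linarith
  obtain ⟨N, hN⟩ := (htend2.eventually (eventually_gt_nhds hlt)).exists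
  exact ⟨N, hN⟩
end
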